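/- arXiv:2104.06537 — 6 statements merged into one kernel-verified Lean document; each statement's English description precedes it below -/
import Mathlib

section
/- Let ℬ be a locally finitely presentable category and B an object of ℬ. Every object of the coslice generator 𝒢_B is finitely presented in B↓ℬ. That is, if l : B → C is a pushout of a morphism k : K → K' between finitely presented objects along some a : K → B, then l is a finitely presented object of the coslice B↓ℬ. -/
open CategoryTheory Limits Opposite

universe w v u

section Defs

variable {𝒞 : Type u} [Category.{v} 𝒞]

/-- An object `K` is finitely presented if `Hom(K, -)` preserves filtered colimits. -/
def IsFinPres (K : 𝒞) : Prop :=
  ∀ (J : Type v) (_ : SmallCategory J) (_ : IsFiltered J),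
    Nonempty (PreservesColimitsOfShape J (coyoneda.obj (op K)))

/-- A category is locally finitely presentable if it is cocomplete and admits an essentially
small family of finitely presented objects such that every object is a filtered colimit of
objects of this family. -/
class IsLFP (𝒞 : Type u) [Category.{v} 𝒞] extends HasColimits 𝒞 : Prop where
  exists_gen : ∃ S : Set 𝒞, Small.{v} S ∧ (∀ K ∈ S, IsFinPres K) ∧
    ∀ X : 𝒞, ∃ (J : Type v) (_ : SmallCategory J) (_ : IsFiltered J)
      (D : J ⥤ 𝒞) (c : Cocone D) (_ : Nonempty (IsColimit c)),
      c.pt = X ∧ ∀ j, D.obj j ∈ S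

/-- `l : X ⟶ Y` belongs to the coslice generator `𝒢_X`: it is a pushout of a morphism
between finitely presented objects along a map into `X`. -/
def InGen {X Y : 𝒞} (l : X ⟶ Y) : Prop :=
  ∃ (K K' : 𝒞) (_ : IsFinPres K) (_ : IsFinPres K') (k : K ⟶ K') (a : K ⟶ X)
    (c : K' ⟶ Y), IsPushout a k l c

end Defs

section Aux

variable {ℬ : Type u} [Category.{v} ℬ] {B : ℬ} {J : Type v} [SmallCategory J] [IsFiltered J]
  {D : J ⥤ Under B}

theorem hom_comp_ι_const (s : Cocone (D ⋙ Under.forget B)) (j j' : J) :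
    (D.obj j).hom ≫ s.ι.app j = (D.obj j').hom ≫ s.ι.app j' := by
  have h1 := s.w (IsFiltered.leftToMax j j')
  have h2 := s.w (IsFiltered.rightToMax j j')
  dsimp at h1 h2
  erw [← h1, ← h2, ← Category.assoc, ← Category.assoc, Under.w, Under.w]

/-- Raise a cocone over `D ⋙ Under.forget B` to a cocone over `D`, for `J` filtered. -/
@[simps]
noncomputable def raiseCocone (s : Cocone (D ⋙ Under.forget B)) : Cocone D := by
  haveI : Nonempty J := IsFiltered.nonempty
  exact
  { pt := Under.mk ((D.obj (Classical.arbitrary J)).hom ≫ s.ι.app (Classical.arbitrary J))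
    ι :=
      { app := fun j => Under.homMk (s.ι.app j) (by
          simpa using hom_comp_ι_const s j (Classical.arbitrary J))
        naturality := fun j j' u => by
          apply CategoryTheory.Under.UnderMorphism.ext
          exact (s.w u).trans (Category.comp_id _).symm } }

/-- The forgetful functor `Under B ⥤ ℬ` maps colimit cocones over filtered diagrams to
colimit cocones. -/
noncomputable def forgetMapCoconeIsColimit
 {cc : Cocone D} (hcc : IsColimit cc) :
    IsColimit ((Under.forget B).mapCocone cc) := by
  haveI : Nonempty J := IsFiltered.nonempty
  exact
  { desc := fun s => (hcc.desc (raiseCocone s)).right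
    fac := fun s j => by
      dsimp
      erw [← Under.comp_right, hcc.fac]
      rfl
    uniq := fun s m hm => by
      have he : cc.pt.hom ≫ m = (raiseCocone s).pt.hom := by
        have hw : (D.obj (Classical.arbitrary J)).hom
            ≫ (cc.ι.app (Classical.arbitrary J)).right = cc.pt.hom := Under.w _
        have hm' := hm (Classical.arbitrary J)
        dsimp at hm'
        erw [← hw, Category.assoc, hm']
        rfl
      have h := hcc.uniq (raiseCocone s) (Under.homMk m he) (fun j => by
        apply CategoryTheory.Under.UnderMorphism.ext
        have := hm j
        dsimp at this ⊢
        exact this)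
      exact congrArg CommaMorphism.right h }

end Aux

/-- Every object of the coslice generator `𝒢_B` is finitely presented in `B↓ℬ`: if
`l : B ⟶ C` is a pushout of a morphism between finitely presented objects along a map
into `B`, then `l` is a finitely presented object of the coslice `Under B`. -/
theorem stmt6 {ℬ : Type u} [Category.{v} ℬ] [IsLFP ℬ] {B : ℬ}
    (l : Under B) (hl : InGen l.hom) : IsFinPres l := by
  obtain ⟨K, K', hK, hK', k, a, c, hpo⟩ := hl
  intro J sJ hJ
  haveI : IsFiltered J := hJ
  haveI pK := (hK J sJ hJ).some
  haveI pK' := (hK' J sJ hJ).some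
  refine ⟨⟨fun {D} => ⟨fun {cc} hcc => ?_⟩⟩⟩
  have hccB : IsColimit ((Under.forget B).mapCocone cc) := forgetMapCoconeIsColimit hcc
  have hcK' : IsColimit ((coyoneda.obj (op K')).mapCocone ((Under.forget B).mapCocone cc)) :=
    isColimitOfPreserves _ hccB
  have hcK : IsColimit ((coyoneda.obj (op K)).mapCocone ((Under.forget B).mapCocone cc)) :=
    isColimitOfPreserves _ hccB
  refine ⟨Types.FilteredColimit.isColimitOf _ _ ?_ ?_⟩
  · -- joint surjectivity
    intro x
    obtain ⟨j, (g : K' ⟶ (D.obj j).right), hg⟩ := Types.jointly_surjective _ hcK' (c ≫ x.right)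
    dsimp at hg x
    change g ≫ (cc.ι.app j).right = c ≫ x.right at hg
    have hwx : l.hom ≫ x.right = cc.pt.hom := Under.w _
    have hwj : (D.obj j).hom ≫ (cc.ι.app j).right = cc.pt.hom := Under.w _
    have heq : (k ≫ g) ≫ (cc.ι.app j).right = (a ≫ (D.obj j).hom) ≫ (cc.ι.app j).right := by
      rw [Category.assoc, hg, ← Category.assoc, ← hpo.w, Category.assoc, hwx,
        Category.assoc, hwj]
    obtain ⟨n, u, v, huv⟩ :=
      (Types.FilteredColimit.isColimit_eq_iff (i := j) (j := j) _ hcK).mp heq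
    dsimp at huv
    change (k ≫ g) ≫ (D.map u).right = (a ≫ (D.obj j).hom) ≫ (D.map v).right at huv
    have hwv : (D.obj j).hom ≫ (D.map v).right = (D.obj n).hom := Under.w _
    have hcomm : a ≫ (D.obj n).hom = k ≫ g ≫ (D.map u).right := by
      rw [← hwv, ← Category.assoc, ← huv, Category.assoc]
    refine ⟨n, Under.homMk (hpo.desc (D.obj n).hom (g ≫ (D.map u).right) hcomm)
      (hpo.inl_desc _ _ _), ?_⟩
    apply CategoryTheory.Under.UnderMorphism.ext
    dsimp
    apply hpo.hom_ext
    · have hwn : (D.obj n).hom ≫ (cc.ι.app n).right = cc.pt.hom := Under.w _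
      erw [hwx, ← Category.assoc, hpo.inl_desc, hwn]
    · have hij : (D.map u).right ≫ (cc.ι.app n).right = (cc.ι.app j).right := by
        rw [← Under.comp_right, cc.w]
      erw [← hg, ← Category.assoc, hpo.inr_desc, Category.assoc, hij]
  · -- equality is eventually witnessed
    intro i j xi xj h
    dsimp at h xi xj
    set f := IsFiltered.leftToMax i j
    set g := IsFiltered.rightToMax i j
    set m := IsFiltered.max i j
    have hy : (xi ≫ D.map f) ≫ cc.ι.app m = (xj ≫ D.map g) ≫ cc.ι.app m := by
      rw [Category.assoc, Category.assoc, cc.w, cc.w, h]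
    have heq : (c ≫ (xi ≫ D.map f).right) ≫ (cc.ι.app m).right
        = (c ≫ (xj ≫ D.map g).right) ≫ (cc.ι.app m).right := by
      rw [Category.assoc, Category.assoc, ← Under.comp_right, ← Under.comp_right, hy]
    obtain ⟨n, u, v, huv⟩ :=
      (Types.FilteredColimit.isColimit_eq_iff (i := m) (j := m) _ hcK').mp heq
    dsimp at huv
    change (c ≫ xi.right ≫ (D.map f).right) ≫ (D.map u).right = (c ≫ xj.right ≫ (D.map g).right) ≫ (D.map v).right at huv
    simp only [← Category.assoc] at huv
    refine ⟨n, f ≫ u, g ≫ v, ?_⟩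
    dsimp
    rw [D.map_comp, D.map_comp, ← Category.assoc, ← Category.assoc]
    apply CategoryTheory.Under.UnderMorphism.ext
    simp only [Under.comp_right]
    apply hpo.hom_ext
    · have h1 : l.hom ≫ xi.right = (D.obj i).hom := Under.w _
      have h2 : (D.obj i).hom ≫ (D.map f).right = (D.obj m).hom := Under.w _
      have h3 : (D.obj m).hom ≫ (D.map u).right = (D.obj n).hom := Under.w _
      have h4 : l.hom ≫ xj.right = (D.obj j).hom := Under.w _
      have h5 : (D.obj j).hom ≫ (D.map g).right = (D.obj m).hom := Under.w _
      have h6 : (D.obj m).hom ≫ (D.map v).right = (D.obj n).hom := Under.w _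
      simp only [← Category.assoc]
      rw [h1, h2, h3, h4, h5, h6]
    · simp only [← Category.assoc]
      simpa using huv
end

section
/- Let ℬ be locally finitely presentable. Given a pushout square in ℬ with top k : K₀ → K₀', left a₀ : K₀ → B, bottom n : B → C, where K₀ and K₀' are finitely presented, and given an arrow a : K → C with K finitely presented, there exists a factorization a₀ = a₁ ∘ a₂ with a₂ : K₀ → K₁, a₁ : K₁ → B, K₁ finitely presented, such that a factors through the pushout of k along a₂: i.e., a factors through the canonical map (a₂)_*K₀' → C induced by the resulting pasting of pushout squares. -/
open CategoryTheory Limits Opposite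

universe w v u

section Aux

variable {ℬ : Type u} [Category.{v} ℬ] [HasPushouts ℬ]
variable {J : Type w} [Category.{w} J] {D : J ⥤ ℬ} {K₀ K₀' : ℬ}

/-- The diagram of pushouts of `k` along the maps `K₀ ⟶ D g.right`, indexed by `Under j`. -/
@[simps]
noncomputable def anelFunctor (D : J ⥤ ℬ) (k : K₀ ⟶ K₀') {j : J} (f : K₀ ⟶ D.obj j) :
    Under j ⥤ ℬ where
  obj g := pushout (f ≫ D.map g.hom) k
  map {g g'} m := pushout.map _ _ _ _ (D.map m.right) (𝟙 _) (𝟙 _)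
    (by rw [Category.assoc, ← D.map_comp, Under.w m, Category.id_comp]) (by simp)
  map_id g := by apply pushout.hom_ext <;> simp
  map_comp m m' := by simp [pushout.map_comp]

variable (k : K₀ ⟶ K₀') {j : J} (f : K₀ ⟶ D.obj j)

/-- The cocone over `anelFunctor` with apex `C`. -/
@[simps]
noncomputable def anelCocone {C : ℬ} (cc : Cocone D) (a₀ : K₀ ⟶ cc.pt)
    (n : cc.pt ⟶ C) (c : K₀' ⟶ C)
    (hf : f ≫ cc.ι.app j = a₀) (hw : a₀ ≫ n = k ≫ c) :
    Cocone (anelFunctor D k f) where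
  pt := C
  ι :=
    { app := fun g => pushout.desc (cc.ι.app g.right ≫ n) c (by
        have h1 : D.map g.hom ≫ cc.ι.app g.right = cc.ι.app j := by
          have := cc.w g.hom; simpa using this
        rw [← Category.assoc, Category.assoc f, h1, hf, hw])
      naturality := fun g g' m => by
        have h1 : D.map m.right ≫ cc.ι.app g'.right = cc.ι.app g.right := by
          have := cc.w m.right; simpa using this
        apply pushout.hom_ext
        · erw [pushout.inl_desc_assoc]
          exact (Category.assoc _ _ _).trans ((congrArg (D.map m.right ≫ ·) (pushout.inl_desc _ _ _)).trans
            ((reassoc_of% h1) n |>.trans ((Category.assoc _ _ _).symm.trans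
              ((Category.comp_id _).trans (pushout.inl_desc _ _ _))).symm))
        · erw [pushout.inr_desc_assoc]
          exact (Category.assoc _ _ _).trans <| (Category.id_comp (obj := ℬ) _).trans ((pushout.inr_desc (f := f ≫ D.map g'.hom) (g := k) _ _ _).trans
            ((Category.assoc _ _ _).symm.trans ((Category.comp_id _).trans
              (pushout.inr_desc (f := f ≫ D.map g.hom) (g := k) _ _ _))).symm) }

/-- Auxiliary cocone over `Under.forget j ⋙ D` obtained from a cocone over `anelFunctor`. -/
@[simps]
noncomputable def anelBase (s : Cocone (anelFunctor D k f)) :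
    Cocone (Under.forget j ⋙ D) where
  pt := s.pt
  ι :=
    { app := fun g => pushout.inl (f ≫ D.map g.hom) k ≫ s.ι.app g
      naturality := fun g g' m => by
        dsimp
        rw [Category.comp_id, ← s.w m]
        erw [← Category.assoc, ← Category.assoc]
        congr 1
        erw [pushout.inl_desc] }

/-- The cocone `anelCocone` is a colimit cocone: filtered colimits commute with pushouts. -/
noncomputable def anelIsColimit [IsFiltered J] {C : ℬ} (cc : Cocone D) (t : IsColimit cc)
    (a₀ : K₀ ⟶ cc.pt) (n : cc.pt ⟶ C) (c : K₀' ⟶ C)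
    (hf : f ≫ cc.ι.app j = a₀) (hpo : IsPushout a₀ k n c) :
    IsColimit (anelCocone k f cc a₀ n c hf hpo.w) := by
  have t' : IsColimit (cc.whisker (Under.forget j)) :=
    (Functor.Final.isColimitWhiskerEquiv (Under.forget j) cc).symm t
  have hfac : ∀ (s : Cocone (anelFunctor D k f)) (g : Under j),
      cc.ι.app g.right ≫ t'.desc (anelBase k f s) =
        pushout.inl (f ≫ D.map g.hom) k ≫ s.ι.app g := fun s g => t'.fac (anelBase k f s) g
  have hinr : ∀ (s : Cocone (anelFunctor D k f)) (g : Under j),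
      pushout.inr (f ≫ D.map (𝟙 j)) k ≫ s.ι.app (Under.mk (𝟙 j)) =
        pushout.inr (f ≫ D.map g.hom) k ≫ s.ι.app g := by
    intro s g
    have hmor : Under.mk (𝟙 j) ⟶ g := Under.homMk g.hom (by simp)
    rw [← s.w hmor]
    erw [← Category.assoc]
    congr 1
    erw [pushout.inr_desc, Category.id_comp]
  have hw : ∀ s : Cocone (anelFunctor D k f),
      a₀ ≫ t'.desc (anelBase k f s) =
        k ≫ pushout.inr (f ≫ D.map (𝟙 j)) k ≫ s.ι.app (Under.mk (𝟙 j)) := by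
    intro s
    rw [← hf, Category.assoc]
    have h1 := hfac s (Under.mk (𝟙 j))
    dsimp at h1
    rw [h1]
    erw [← Category.assoc, ← Category.assoc]
    congr 1
    have := pushout.condition (f := f ≫ D.map (𝟙 j)) (g := k)
    simpa using this
  exact
  { desc := fun s => hpo.desc (t'.desc (anelBase k f s))
      (pushout.inr (f ≫ D.map (𝟙 j)) k ≫ s.ι.app (Under.mk (𝟙 j))) (hw s)
    fac := fun s g => by
      apply pushout.hom_ext
      · rw [anelCocone_ι_app]
        erw [pushout.inl_desc_assoc, Category.assoc, hpo.inl_desc]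
        exact hfac s g
      · rw [anelCocone_ι_app]
        erw [pushout.inr_desc_assoc, hpo.inr_desc]
        exact hinr s g
    uniq := fun s m hm => by
      apply hpo.hom_ext
      · erw [hpo.inl_desc]
        apply t'.hom_ext
        intro g
        have h2 := hfac s g
        dsimp
        erw [h2, ← hm g, ← Category.assoc, ← Category.assoc]
        congr 1
        erw [pushout.inl_desc]
      · erw [hpo.inr_desc, ← hm (Under.mk (𝟙 j)), ← Category.assoc]
        congr 1
        erw [pushout.inr_desc] }

end Aux

/-- Anel's lemma. -/
theorem stmt7 {ℬ : Type u} [Category.{v} ℬ] [IsLFP ℬ] {K₀ K₀' B C K : ℬ}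
    (hK₀ : IsFinPres K₀) (hK₀' : IsFinPres K₀') (hK : IsFinPres K)
    (k : K₀ ⟶ K₀') (a₀ : K₀ ⟶ B) (n : B ⟶ C) (c : K₀' ⟶ C)
    (hpo : IsPushout a₀ k n c) (a : K ⟶ C) :
    ∃ (K₁ : ℬ) (_ : IsFinPres K₁) (a₂ : K₀ ⟶ K₁) (a₁ : K₁ ⟶ B)
      (_ : a₂ ≫ a₁ = a₀) (P : ℬ) (p : K₁ ⟶ P) (q : K₀' ⟶ P)
      (_ : IsPushout a₂ k p q) (d : P ⟶ C),
      p ≫ d = a₁ ≫ n ∧ q ≫ d = c ∧ ∃ a' : K ⟶ P, a' ≫ d = a := by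
  obtain ⟨S, -, hSfp, hgen⟩ := IsLFP.exists_gen (𝒞 := ℬ)
  obtain ⟨J, _, _, D, cc, ⟨t⟩, hpt, hobj⟩ := hgen B
  subst hpt
  -- factor a₀ through some stage, using finite presentability of K₀
  obtain ⟨PK₀⟩ := hK₀ J _ ‹_›
  have t0 : IsColimit ((coyoneda.obj (op K₀)).mapCocone cc) := isColimitOfPreserves _ t
  obtain ⟨j, f, hf⟩ := Types.jointly_surjective _ t0 a₀
  have hf' : f ≫ cc.ι.app j = a₀ := hf
  -- the filtered colimit of pushouts
  have tC := anelIsColimit k f cc t a₀ n c hf' hpo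
  -- factor a through some stage, using finite presentability of K
  obtain ⟨PK⟩ := hK (Under j) _ inferInstance
  have tC0 : IsColimit ((coyoneda.obj (op K)).mapCocone
      (anelCocone k f cc a₀ n c hf' hpo.w)) := isColimitOfPreserves _ tC
  obtain ⟨g, a', ha'⟩ := Types.jointly_surjective _ tC0 a
  have ha'' : a' ≫ (anelCocone k f cc a₀ n c hf' hpo.w).ι.app g = a := ha'
  refine ⟨D.obj g.right, hSfp _ (hobj g.right), f ≫ D.map g.hom, cc.ι.app g.right,
    ?_, pushout (f ≫ D.map g.hom) k, pushout.inl _ _, pushout.inr _ _,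
    IsPushout.of_hasPushout _ _, (anelCocone k f cc a₀ n c hf' hpo.w).ι.app g, ?_, ?_, a', ha''⟩
  · have h1 : D.map g.hom ≫ cc.ι.app g.right = cc.ι.app j := by
      have := cc.w g.hom; simpa using this
    rw [Category.assoc, h1, hf']
  · exact pushout.inl_desc _ _ _
  · exact pushout.inr_desc _ _ _
end

section
/- Let ℬ be locally finitely presentable and B an object. Given a commuting triangle n = g ∘ n₁ with n₁ : B → C₁ and n₂ = g ∘ n₁ : B → C₂ both in the coslice generator 𝒢_B, there exist a finitely presented object K, morphisms m₁ : K → K₁, m₂ : K → K₂ and m : K₁ → K₂ between finitely presented objects with m₂ = m ∘ m₁, and a : K → B, such that n₁ is the pushout of m₁ along a, n₂ is the pushout of m₂ along a, and g : C₁ → C₂ is the pushout of m along the induced map a₁ : K₁ → C₁. In particular g belongs to 𝒢_{C₁}. -/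
open CategoryTheory Limits Opposite

universe w v u

section Aux

set_option linter.unusedSectionVars false

variable {𝒞 : Type u} [Category.{v} 𝒞]

lemma IsFinPres.factors {J : Type v} [SmallCategory J] [IsFiltered J] {D : J ⥤ 𝒞}
    {cc : Cocone D} (hcc : IsColimit cc) {X : 𝒞} (hX : IsFinPres X) (f : X ⟶ cc.pt) :
    ∃ (j : J) (f' : X ⟶ D.obj j), f' ≫ cc.ι.app j = f := by
  obtain ⟨h⟩ := hX J inferInstance inferInstance
  have h2 : IsColimit ((coyoneda.obj (op X)).mapCocone cc) := isColimitOfPreserves _ hcc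
  obtain ⟨j, y, hy⟩ := Types.jointly_surjective _ h2 f
  exact ⟨j, y, hy⟩

lemma IsFinPres.eq_of {J : Type v} [SmallCategory J] [IsFiltered J] {D : J ⥤ 𝒞}
    {cc : Cocone D} (hcc : IsColimit cc) {X : 𝒞} (hX : IsFinPres X) {j : J}
    (u v : X ⟶ D.obj j) (huv : u ≫ cc.ι.app j = v ≫ cc.ι.app j) :
    ∃ (j' : J) (w : j ⟶ j'), u ≫ D.map w = v ≫ D.map w := by
  obtain ⟨h⟩ := hX J inferInstance inferInstance
  have h2 : IsColimit ((coyoneda.obj (op X)).mapCocone cc) := isColimitOfPreserves _ hcc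
  have huv' : ((coyoneda.obj (op X)).mapCocone cc).ι.app j u
      = ((coyoneda.obj (op X)).mapCocone cc).ι.app j v := huv
  obtain ⟨k, w₁, w₂, hw⟩ := (Types.FilteredColimit.isColimit_eq_iff _ h2).mp huv'
  have hw' : u ≫ D.map w₁ = v ≫ D.map w₂ := hw
  refine ⟨IsFiltered.coeq w₁ w₂, w₁ ≫ IsFiltered.coeqHom w₁ w₂, ?_⟩
  calc u ≫ D.map (w₁ ≫ IsFiltered.coeqHom w₁ w₂)
      = (u ≫ D.map w₁) ≫ D.map (IsFiltered.coeqHom w₁ w₂) := by rw [D.map_comp, Category.assoc]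
    _ = (v ≫ D.map w₂) ≫ D.map (IsFiltered.coeqHom w₁ w₂) := by rw [hw']
    _ = v ≫ D.map (w₂ ≫ IsFiltered.coeqHom w₁ w₂) := by rw [D.map_comp, Category.assoc]
    _ = v ≫ D.map (w₁ ≫ IsFiltered.coeqHom w₁ w₂) := by rw [← IsFiltered.coeq_condition]

lemma isFinPres_pushout {Z X Y P : 𝒞} {f : Z ⟶ X} {g : Z ⟶ Y} {i₁ : X ⟶ P} {i₂ : Y ⟶ P}
    (sq : IsPushout f g i₁ i₂) (hZ : IsFinPres Z) (hX : IsFinPres X) (hY : IsFinPres Y) :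
    IsFinPres P := by
  intro J _ _
  refine ⟨⟨fun {F} => ⟨fun {cc} hcc => ⟨?_⟩⟩⟩⟩
  apply Types.FilteredColimit.isColimitOf
  · -- surjectivity
    intro x
    obtain ⟨jX, xb, hxb⟩ := hX.factors hcc (i₁ ≫ x)
    obtain ⟨jY, yb, hyb⟩ := hY.factors hcc (i₂ ≫ x)
    set j₀ := IsFiltered.max jX jY with hj₀
    have h₁ : (f ≫ xb ≫ F.map (IsFiltered.leftToMax jX jY)) ≫ cc.ι.app j₀
        = (g ≫ yb ≫ F.map (IsFiltered.rightToMax jX jY)) ≫ cc.ι.app j₀ := by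
      simp only [Category.assoc, cc.w, j₀]
      rw [hxb, hyb, ← Category.assoc, ← Category.assoc, sq.w]
    obtain ⟨k, w, hk⟩ := hZ.eq_of hcc _ _ h₁
    rw [Category.assoc, Category.assoc, Category.assoc, Category.assoc] at hk
    refine ⟨k, sq.desc (xb ≫ F.map (IsFiltered.leftToMax jX jY) ≫ F.map w)
      (yb ≫ F.map (IsFiltered.rightToMax jX jY) ≫ F.map w) hk, ?_⟩
    apply sq.hom_ext
    · show i₁ ≫ x = i₁ ≫ (_ ≫ cc.ι.app k)
      rw [← Category.assoc, sq.inl_desc]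
      simp only [Category.assoc, cc.w]
      rw [hxb]
    · show i₂ ≫ x = i₂ ≫ (_ ≫ cc.ι.app k)
      rw [← Category.assoc, sq.inr_desc]
      simp only [Category.assoc, cc.w]
      rw [hyb]
  · -- injectivity
    intro i j xi xj hij
    have hij' : (xi : P ⟶ F.obj i) ≫ cc.ι.app i = xj ≫ cc.ι.app j := hij
    set l := IsFiltered.leftToMax i j
    set r := IsFiltered.rightToMax i j
    have h₁ : (i₁ ≫ xi ≫ F.map l) ≫ cc.ι.app (IsFiltered.max i j)
        = (i₁ ≫ xj ≫ F.map r) ≫ cc.ι.app (IsFiltered.max i j) := by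
      simp only [Category.assoc, cc.w]
      rw [hij']
    obtain ⟨k₁, w₁, e₁⟩ := hX.eq_of hcc _ _ h₁
    have h₂ : (i₂ ≫ xi ≫ F.map l ≫ F.map w₁) ≫ cc.ι.app k₁
        = (i₂ ≫ xj ≫ F.map r ≫ F.map w₁) ≫ cc.ι.app k₁ := by
      simp only [Category.assoc, cc.w]
      rw [hij']
    obtain ⟨k₂, w₂, e₂⟩ := hY.eq_of hcc _ _ h₂
    refine ⟨k₂, l ≫ w₁ ≫ w₂, r ≫ w₁ ≫ w₂, ?_⟩
    show xi ≫ F.map (l ≫ w₁ ≫ w₂) = xj ≫ F.map (r ≫ w₁ ≫ w₂)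
    apply sq.hom_ext
    · simp only [F.map_comp]
      simp only [← Category.assoc] at e₁ ⊢
      rw [e₁]
    · simp only [F.map_comp]
      simp only [← Category.assoc] at e₂ ⊢
      rw [e₂]

variable [HasPushouts 𝒞]

/-- The stage diagram: `i ↦ D_i ⊔_L L'`. -/
@[simps] noncomputable def stageF {J : Type v} [SmallCategory J] (D : J ⥤ 𝒞) (j₀ : J)
    {L L' : 𝒞} (k' : L ⟶ L') (g0 : L ⟶ D.obj j₀) : Under j₀ ⥤ 𝒞 where
  obj i := pushout (g0 ≫ D.map i.hom) k'
  map {i i'} w := pushout.desc (D.map w.right ≫ pushout.inl _ _) (pushout.inr _ _) (by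
    rw [Category.assoc, ← Category.assoc (D.map i.hom), ← D.map_comp, Under.w w,
      ← Category.assoc, pushout.condition])
  map_id i := by
    apply pushout.hom_ext
    · simp
    · simp
  map_comp {i i' i''} w w' := by
    apply pushout.hom_ext
    · rw [pushout.inl_desc, pushout.inl_desc_assoc, Category.assoc, pushout.inl_desc,
        Under.comp_right, D.map_comp, Category.assoc]
    · rw [pushout.inr_desc, pushout.inr_desc_assoc, pushout.inr_desc]

attribute [reducible] stageF

section

variable {J : Type v} [SmallCategory J] (D : J ⥤ 𝒞) (j₀ : J)
    {L L' : 𝒞} (k' : L ⟶ L') (g0 : L ⟶ D.obj j₀) {cc : Cocone D}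
    {P : 𝒞} {f : L ⟶ cc.pt} (hf : g0 ≫ cc.ι.app j₀ = f)
    {n : cc.pt ⟶ P} {c' : L' ⟶ P} (sq : IsPushout f k' n c')

include hf sq in
lemma stage_comm (i : Under j₀) :
    (g0 ≫ D.map i.hom) ≫ (cc.ι.app i.right ≫ n) = k' ≫ c' := by
  rw [← sq.w, ← hf]
  simp

/-- The cocone of the stage diagram with summit `P`. -/
@[simps] noncomputable def stageCocone : Cocone (stageF D j₀ k' g0) where
  pt := P
  ι :=
    { app := fun i => pushout.desc (cc.ι.app i.right ≫ n) c' (stage_comm D j₀ k' g0 hf sq i)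
      naturality := fun i i' w => by
        have h : D.map w.right ≫ cc.ι.app i'.right = cc.ι.app i.right := cc.w w.right
        apply pushout.hom_ext
        · simp only [stageF_map, Category.comp_id, Functor.const_obj_obj, Functor.const_obj_map]
          rw [← Category.assoc, pushout.inl_desc, Category.assoc, pushout.inl_desc,
            ← Category.assoc, h, pushout.inl_desc]
        · rw [pushout.inr_desc_assoc, pushout.inr_desc, Functor.const_obj_map]
          exact ((pushout.inr_desc_assoc _ _ _ (𝟙 P)).trans (Category.comp_id _)).symm }

attribute [reducible] stageCocone

lemma stage_isPushout (i : Under j₀) :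
    IsPushout (cc.ι.app i.right) (pushout.inl (g0 ≫ D.map i.hom) k') n
      ((stageCocone D j₀ k' g0 hf sq).ι.app i) := by
  refine IsPushout.of_left ?_ ?_ (IsPushout.of_hasPushout (g0 ≫ D.map i.hom) k')
  · have e1 : (g0 ≫ D.map i.hom) ≫ cc.ι.app i.right = f := by
      rw [← hf]
      simp
    have e2 : pushout.inr (g0 ≫ D.map i.hom) k' ≫ (stageCocone D j₀ k' g0 hf sq).ι.app i = c' := by
      exact pushout.inr_desc _ _ _
    rw [e1]; refine (congrArg (IsPushout f k' n) e2).mpr ?_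
    exact sq
  · exact (pushout.inl_desc _ _ _).symm

variable [IsFiltered J]

lemma stage_isColimit (hcc : IsColimit cc) :
    Nonempty (IsColimit (stageCocone D j₀ k' g0 hf sq)) := by
  have hwh : IsColimit (cc.whisker (Under.forget j₀)) :=
    (Functor.Final.isColimitWhiskerEquiv (Under.forget j₀) cc).symm hcc
  -- the cocone on the underlying stage diagram induced by a cocone on `stageF`
  let sB : Cocone (stageF D j₀ k' g0) → Cocone (Under.forget j₀ ⋙ D) := fun s =>
    { pt := s.pt
      ι :=
        { app := fun i => pushout.inl (g0 ≫ D.map i.hom) k' ≫ s.ι.app i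
          naturality := fun i i' w => by
            dsimp
            rw [Category.comp_id, ← s.w w, ← Category.assoc, ← Category.assoc]
            congr 1
            rw [stageF_map, pushout.inl_desc] } }
  have hfB : ∀ (s : Cocone (stageF D j₀ k' g0)) (i : Under j₀),
      cc.ι.app i.right ≫ hwh.desc (sB s) = pushout.inl (g0 ≫ D.map i.hom) k' ≫ s.ι.app i :=
    fun s i => hwh.fac (sB s) i
  have hbotc : ∀ (s : Cocone (stageF D j₀ k' g0)),
      f ≫ hwh.desc (sB s)
        = k' ≫ (pushout.inr (g0 ≫ D.map (Under.mk (𝟙 j₀)).hom) k' ≫ s.ι.app (Under.mk (𝟙 j₀))) := by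
    intro s
    have h := hfB s (Under.mk (𝟙 j₀))
    have h' : cc.ι.app j₀ ≫ hwh.desc (sB s)
        = pushout.inl (g0 ≫ D.map (Under.mk (𝟙 j₀)).hom) k' ≫ s.ι.app (Under.mk (𝟙 j₀)) := h
    rw [← hf, Category.assoc, h', ← Category.assoc, ← Category.assoc]
    congr 1
    simpa using pushout.condition (f := g0 ≫ D.map (Under.mk (𝟙 j₀)).hom) (g := k')
  -- naturality to the bottom object
  have hbot : ∀ (s : Cocone (stageF D j₀ k' g0)) (i : Under j₀),
      pushout.inr (g0 ≫ D.map (Under.mk (𝟙 j₀)).hom) k' ≫ s.ι.app (Under.mk (𝟙 j₀))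
        = pushout.inr (g0 ≫ D.map i.hom) k' ≫ s.ι.app i := by
    intro s i
    have e : Under.mk (𝟙 j₀) ⟶ i := Under.homMk i.hom (by simp)
    rw [← s.w e, ← Category.assoc]
    congr 1
    rw [stageF_map, pushout.inr_desc]
  refine ⟨{ desc := fun s => sq.desc (hwh.desc (sB s)) _ (hbotc s), fac := ?_, uniq := ?_ }⟩
  · intro s i
    apply pushout.hom_ext
    · rw [← Category.assoc]
      have h1 : pushout.inl (g0 ≫ D.map i.hom) k' ≫ (stageCocone D j₀ k' g0 hf sq).ι.app i
          = cc.ι.app i.right ≫ n := by exact pushout.inl_desc _ _ _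
      rw [h1, Category.assoc, sq.inl_desc, hfB s i]
    · rw [← Category.assoc]
      have h2 : pushout.inr (g0 ≫ D.map i.hom) k' ≫ (stageCocone D j₀ k' g0 hf sq).ι.app i
          = c' := by exact pushout.inr_desc _ _ _
      rw [h2, sq.inr_desc, hbot s i]
  · intro s m hm
    apply sq.hom_ext
    · rw [sq.inl_desc]
      refine hwh.uniq (sB s) (n ≫ m) (fun i => ?_)
      have h1 : (cc.whisker (Under.forget j₀)).ι.app i = cc.ι.app i.right := rfl
      have h3 : cc.ι.app i.right ≫ n
          = pushout.inl (g0 ≫ D.map i.hom) k' ≫ (stageCocone D j₀ k' g0 hf sq).ι.app i := by exact (pushout.inl_desc _ _ _).symm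
      show cc.ι.app i.right ≫ n ≫ m = pushout.inl (g0 ≫ D.map i.hom) k' ≫ s.ι.app i
      rw [← Category.assoc, h3, Category.assoc, hm i]
    · rw [sq.inr_desc]
      have h2 : c' = pushout.inr (g0 ≫ D.map (Under.mk (𝟙 j₀)).hom) k'
          ≫ (stageCocone D j₀ k' g0 hf sq).ι.app (Under.mk (𝟙 j₀)) := by
            exact (pushout.inr_desc _ _ _).symm
      rw [h2, Category.assoc, hm (Under.mk (𝟙 j₀))]

end

end Aux

/-- Given a commuting triangle `n₂ = n₁ ≫ g` under `B` with `n₁` and `n₂` in the coslice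
generator `𝒢_B`, the whole triangle can be lifted: there is a triangle
`m₂ = m₁ ≫ m` between finitely presented objects and `a : K ⟶ B` such that `n₁`, `n₂`
and `g` are respectively pushouts of `m₁`, `m₁ ≫ m` and `m`; in particular `g ∈ 𝒢_{C₁}`. -/
theorem stmt8 {ℬ : Type u} [Category.{v} ℬ] [IsLFP ℬ] {B C₁ C₂ : ℬ}
    (n₁ : B ⟶ C₁) (g : C₁ ⟶ C₂)
    (h₁ : InGen n₁) (h₂ : InGen (n₁ ≫ g)) :
    ∃ (K K₁ K₂ : ℬ) (_ : IsFinPres K) (_ : IsFinPres K₁) (_ : IsFinPres K₂)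
      (m₁ : K ⟶ K₁) (m : K₁ ⟶ K₂) (a : K ⟶ B) (a₁ : K₁ ⟶ C₁) (a₂ : K₂ ⟶ C₂),
      IsPushout a m₁ n₁ a₁ ∧ IsPushout a (m₁ ≫ m) (n₁ ≫ g) a₂ ∧
        IsPushout a₁ m g a₂ ∧ InGen g := by
  obtain ⟨K0, K0', hK0, hK0', k, a, c, sq1⟩ := h₁
  obtain ⟨L, L', hL, hL', k', a', c', sq2⟩ := h₂
  obtain ⟨S, hSsmall, hSfp, hgen⟩ := IsLFP.exists_gen (𝒞 := ℬ)
  obtain ⟨J, instJ, instF, D, cc, ⟨hcc⟩, hpt, hS⟩ := hgen B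
  subst hpt
  have hfpD : ∀ j, IsFinPres (D.obj j) := fun j => hSfp _ (hS j)
  obtain ⟨jA, a0, ha0⟩ := hK0.factors hcc a
  obtain ⟨jB, a0', ha0'⟩ := hL.factors hcc a'
  set j₀ := IsFiltered.max jA jB with hj₀
  set ab : K0 ⟶ D.obj j₀ := a0 ≫ D.map (IsFiltered.leftToMax jA jB) with hab
  set ab' : L ⟶ D.obj j₀ := a0' ≫ D.map (IsFiltered.rightToMax jA jB) with hab'
  have haa : ab ≫ cc.ι.app j₀ = a := by
    rw [hab, Category.assoc, cc.w, ha0]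
  have haa' : ab' ≫ cc.ι.app j₀ = a' := by
    rw [hab', Category.assoc, cc.w, ha0']
  -- the two stage diagrams and colimit cocones
  obtain ⟨hE⟩ := stage_isColimit D j₀ k ab haa sq1 hcc
  obtain ⟨hF⟩ := stage_isColimit D j₀ k' ab' haa' sq2 hcc
  set ccE := stageCocone D j₀ k ab haa sq1 with hccE
  set ccF := stageCocone D j₀ k' ab' haa' sq2 with hccF
  have hfpE : ∀ i : Under j₀, IsFinPres ((stageF D j₀ k ab).obj i) := fun i =>
    isFinPres_pushout (IsPushout.of_hasPushout (ab ≫ D.map i.hom) k) hK0 (hfpD i.right) hK0'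
  have hfpF : ∀ i : Under j₀, IsFinPres ((stageF D j₀ k' ab').obj i) := fun i =>
    isFinPres_pushout (IsPushout.of_hasPushout (ab' ≫ D.map i.hom) k') hL (hfpD i.right) hL'
  -- factor the comparison map through a stage
  obtain ⟨i, tb, htb⟩ := (hfpE (Under.mk (𝟙 j₀))).factors hF
    (ccE.ι.app (Under.mk (𝟙 j₀)) ≫ g)
  -- equalize the two maps from `D j₀`
  have l1 : pushout.inl (ab ≫ D.map (Under.mk (𝟙 j₀)).hom) k ≫ ccE.ι.app (Under.mk (𝟙 j₀))
      = cc.ι.app j₀ ≫ n₁ := pushout.inl_desc _ _ _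
  have l2 : pushout.inl (ab' ≫ D.map i.hom) k' ≫ ccF.ι.app i
      = cc.ι.app i.right ≫ (n₁ ≫ g) := pushout.inl_desc _ _ _
  have l3 : D.map i.hom ≫ cc.ι.app i.right = cc.ι.app j₀ := cc.w i.hom
  have huv : (pushout.inl (ab ≫ D.map (Under.mk (𝟙 j₀)).hom) k ≫ tb) ≫ ccF.ι.app i
      = (D.map i.hom ≫ pushout.inl (ab' ≫ D.map i.hom) k') ≫ ccF.ι.app i := by
    have hL1 : (pushout.inl (ab ≫ D.map (Under.mk (𝟙 j₀)).hom) k ≫ tb) ≫ ccF.ι.app i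
        = cc.ι.app j₀ ≫ n₁ ≫ g := by
      rw [Category.assoc, htb, ← Category.assoc, l1, Category.assoc]
    have hL2 : (D.map i.hom ≫ pushout.inl (ab' ≫ D.map i.hom) k') ≫ ccF.ι.app i
        = cc.ι.app j₀ ≫ n₁ ≫ g := by
      rw [Category.assoc, l2, ← Category.assoc, l3]
    exact hL1.trans hL2.symm
  obtain ⟨i', w, hw⟩ := (hfpD j₀).eq_of hF _ _ huv
  have e0 : ab ≫ pushout.inl (ab ≫ D.map (Under.mk (𝟙 j₀)).hom) k
      = k ≫ pushout.inr (ab ≫ D.map (Under.mk (𝟙 j₀)).hom) k := by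
    simpa using pushout.condition (f := ab ≫ D.map (Under.mk (𝟙 j₀)).hom) (g := k)
  have e1 : pushout.inl (ab' ≫ D.map i.hom) k' ≫ (stageF D j₀ k' ab').map w
      = D.map w.right ≫ pushout.inl (ab' ≫ D.map i'.hom) k' := by
    rw [stageF_map, pushout.inl_desc]
  have e2 : D.map i.hom ≫ D.map w.right = D.map i'.hom := by
    rw [← D.map_comp, Under.w w]
  have hvcomm : (ab ≫ D.map i'.hom) ≫ pushout.inl (ab' ≫ D.map i'.hom) k'
      = k ≫ (pushout.inr (ab ≫ D.map (Under.mk (𝟙 j₀)).hom) k ≫ tb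
          ≫ (stageF D j₀ k' ab').map w) := by
    calc (ab ≫ D.map i'.hom) ≫ pushout.inl (ab' ≫ D.map i'.hom) k'
        = ab ≫ D.map i.hom ≫ D.map w.right ≫ pushout.inl (ab' ≫ D.map i'.hom) k' := by
          rw [← Category.assoc (D.map i.hom), e2]
          exact Category.assoc _ _ _
      _ = ab ≫ D.map i.hom ≫ pushout.inl (ab' ≫ D.map i.hom) k'
            ≫ (stageF D j₀ k' ab').map w := by
          rw [e1]
      _ = ab ≫ (pushout.inl (ab ≫ D.map (Under.mk (𝟙 j₀)).hom) k ≫ tb)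
            ≫ (stageF D j₀ k' ab').map w := by
          rw [hw]
          simp only [Category.assoc]
      _ = (ab ≫ pushout.inl (ab ≫ D.map (Under.mk (𝟙 j₀)).hom) k) ≫ tb
            ≫ (stageF D j₀ k' ab').map w := by
          simp only [Category.assoc]
      _ = (k ≫ pushout.inr (ab ≫ D.map (Under.mk (𝟙 j₀)).hom) k) ≫ tb
            ≫ (stageF D j₀ k' ab').map w := by
          rw [e0]
      _ = k ≫ (pushout.inr (ab ≫ D.map (Under.mk (𝟙 j₀)).hom) k ≫ tb
            ≫ (stageF D j₀ k' ab').map w) := by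
          simp only [Category.assoc]
  set m : (stageF D j₀ k ab).obj i' ⟶ (stageF D j₀ k' ab').obj i' :=
    pushout.desc (pushout.inl (ab' ≫ D.map i'.hom) k')
      (pushout.inr (ab ≫ D.map (Under.mk (𝟙 j₀)).hom) k ≫ tb
        ≫ (stageF D j₀ k' ab').map w) hvcomm with hm
  have hmm : pushout.inl (ab ≫ D.map i'.hom) k ≫ m
      = pushout.inl (ab' ≫ D.map i'.hom) k' := pushout.inl_desc _ _ _
  have g1 : IsPushout (cc.ι.app i'.right) (pushout.inl (ab ≫ D.map i'.hom) k) n₁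
      (ccE.ι.app i') := stage_isPushout D j₀ k ab haa sq1 i'
  have g2 : IsPushout (cc.ι.app i'.right) (pushout.inl (ab ≫ D.map i'.hom) k ≫ m) (n₁ ≫ g)
      (ccF.ι.app i') := by
    rw [hmm]
    exact stage_isPushout D j₀ k' ab' haa' sq2 i'
  have l4 : pushout.inl (ab ≫ D.map i'.hom) k ≫ ccE.ι.app i'
      = cc.ι.app i'.right ≫ n₁ := pushout.inl_desc _ _ _
  have l5 : pushout.inl (ab' ≫ D.map i'.hom) k' ≫ ccF.ι.app i'
      = cc.ι.app i'.right ≫ (n₁ ≫ g) := pushout.inl_desc _ _ _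
  have l6 : pushout.inr (ab ≫ D.map i'.hom) k ≫ ccE.ι.app i' = c := pushout.inr_desc _ _ _
  have l7 : pushout.inr (ab ≫ D.map i'.hom) k ≫ m
      = pushout.inr (ab ≫ D.map (Under.mk (𝟙 j₀)).hom) k ≫ tb
          ≫ (stageF D j₀ k' ab').map w := pushout.inr_desc _ _ _
  have l8 : (stageF D j₀ k' ab').map w ≫ ccF.ι.app i' = ccF.ι.app i := ccF.w w
  have l9 : pushout.inr (ab ≫ D.map (Under.mk (𝟙 j₀)).hom) k ≫ ccE.ι.app (Under.mk (𝟙 j₀))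
      = c := pushout.inr_desc _ _ _
  have p : ccE.ι.app i' ≫ g = m ≫ ccF.ι.app i' := by
    apply pushout.hom_ext
    · rw [← Category.assoc, ← Category.assoc, l4, hmm, l5, Category.assoc]
    · rw [← Category.assoc, ← Category.assoc, l6, l7]
      simp only [Category.assoc]
      rw [l8, htb, ← Category.assoc, l9]
  have g3 : IsPushout (ccE.ι.app i') m g (ccF.ι.app i') := IsPushout.of_top g2 p g1
  exact ⟨D.obj i'.right, _, _, hfpD i'.right, hfpE i', hfpF i',
    pushout.inl (ab ≫ D.map i'.hom) k, m, cc.ι.app i'.right, ccE.ι.app i', ccF.ι.app i',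
    g1, g2, g3, ⟨_, _, hfpE i', hfpF i', m, ccE.ι.app i', ccF.ι.app i', g3⟩⟩
end

section
/- Let ℬ be locally finitely presentable and B an object. Then 𝒢_B is a dense generator of B↓ℬ: every object f : B → C of the coslice is the colimit of the canonical (filtered) diagram 𝒢_B↓f → B↓ℬ. -/
open CategoryTheory Limits Opposite

universe w v u

attribute [simp] pushout.inl_desc pushout.inr_desc pushout.inl_desc_assoc pushout.inr_desc_assoc
attribute [simp] coprod.inl_desc coprod.inr_desc coprod.inl_desc_assoc coprod.inr_desc_assoc

section Helpers

variable {𝒞 : Type u} [Category.{v} 𝒞]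

lemma IsFinPres.factors_s11 {K : 𝒞} (hK : IsFinPres K) {J : Type v} [SmallCategory J] [IsFiltered J]
    {D : J ⥤ 𝒞} {c : Cocone D} (hc : IsColimit c) (p : K ⟶ c.pt) :
    ∃ (j : J) (p' : K ⟶ D.obj j), p' ≫ c.ι.app j = p := by
  have : PreservesColimitsOfShape J (coyoneda.obj (op K)) := (hK J ‹_› ‹_›).some
  have hc' := isColimitOfPreserves (coyoneda.obj (op K)) hc
  obtain ⟨j, y, hy⟩ := Types.jointly_surjective _ hc' p
  exact ⟨j, y, hy⟩

lemma IsFinPres.eventuallyEq {K : 𝒞} (hK : IsFinPres K) {J : Type v} [SmallCategory J]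
    [IsFiltered J] {D : J ⥤ 𝒞} {c : Cocone D} (hc : IsColimit c) {j : J} (p q : K ⟶ D.obj j)
    (h : p ≫ c.ι.app j = q ≫ c.ι.app j) :
    ∃ (j' : J) (t : j ⟶ j'), p ≫ D.map t = q ≫ D.map t := by
  have : PreservesColimitsOfShape J (coyoneda.obj (op K)) := (hK J ‹_› ‹_›).some
  have hc' := isColimitOfPreserves (coyoneda.obj (op K)) hc
  have h' : ((coyoneda.obj (op K)).mapCocone c).ι.app j p
      = ((coyoneda.obj (op K)).mapCocone c).ι.app j q := h
  obtain ⟨k, t₁, t₂, ht⟩ := (Types.FilteredColimit.isColimit_eq_iff _ hc').1 h'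
  have ht' : p ≫ D.map t₁ = q ≫ D.map t₂ := ht
  refine ⟨IsFiltered.coeq t₁ t₂, t₁ ≫ IsFiltered.coeqHom t₁ t₂, ?_⟩
  calc p ≫ D.map (t₁ ≫ IsFiltered.coeqHom t₁ t₂)
      = (p ≫ D.map t₁) ≫ D.map (IsFiltered.coeqHom t₁ t₂) := by simp
    _ = (q ≫ D.map t₂) ≫ D.map (IsFiltered.coeqHom t₁ t₂) := by rw [ht']
    _ = q ≫ D.map (t₂ ≫ IsFiltered.coeqHom t₁ t₂) := by simp
    _ = q ≫ D.map (t₁ ≫ IsFiltered.coeqHom t₁ t₂) := by rw [← IsFiltered.coeq_condition]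

lemma IsFinPres.coprod [HasColimits 𝒞] {K₁ K₂ : 𝒞} (h₁ : IsFinPres K₁) (h₂ : IsFinPres K₂) :
    IsFinPres (K₁ ⨿ K₂) := by
  intro J _ _
  refine ⟨⟨fun {D} => ⟨fun {c} hc => ⟨?_⟩⟩⟩⟩
  apply Types.FilteredColimit.isColimitOf
  · intro p
    obtain ⟨j₁, p₁, hp₁⟩ := h₁.factors_s11 hc (coprod.inl ≫ p)
    obtain ⟨j₂, p₂, hp₂⟩ := h₂.factors_s11 hc (coprod.inr ≫ p)
    refine ⟨IsFiltered.max j₁ j₂,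
      coprod.desc (p₁ ≫ D.map (IsFiltered.leftToMax j₁ j₂))
        (p₂ ≫ D.map (IsFiltered.rightToMax j₁ j₂)), ?_⟩
    have : coprod.desc (p₁ ≫ D.map (IsFiltered.leftToMax j₁ j₂))
        (p₂ ≫ D.map (IsFiltered.rightToMax j₁ j₂)) ≫ c.ι.app (IsFiltered.max j₁ j₂) = p := by
      apply coprod.hom_ext
      · simp only [coprod.inl_desc_assoc, Category.assoc, c.w, hp₁]
      · simp only [coprod.inr_desc_assoc, Category.assoc, c.w, hp₂]
    exact this.symm
  · intro i j pi pj h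
    have h' : (pi : K₁ ⨿ K₂ ⟶ D.obj i) ≫ c.ι.app i = pj ≫ c.ι.app j := h
    obtain ⟨k₁, t₁, ht₁⟩ := h₁.eventuallyEq hc
      (coprod.inl ≫ pi ≫ D.map (IsFiltered.leftToMax i j))
      (coprod.inl ≫ pj ≫ D.map (IsFiltered.rightToMax i j))
      (by simp only [Category.assoc, c.w, h'])
    obtain ⟨k₂, t₂, ht₂⟩ := h₂.eventuallyEq hc
      (coprod.inr ≫ pi ≫ D.map (IsFiltered.leftToMax i j) ≫ D.map t₁)
      (coprod.inr ≫ pj ≫ D.map (IsFiltered.rightToMax i j) ≫ D.map t₁)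
      (by simp only [Category.assoc, c.w, h'])
    refine ⟨k₂, IsFiltered.leftToMax i j ≫ t₁ ≫ t₂, IsFiltered.rightToMax i j ≫ t₁ ≫ t₂, ?_⟩
    show pi ≫ D.map _ = pj ≫ D.map _
    apply coprod.hom_ext
    · have := ht₁ =≫ D.map t₂
      simp only [Category.assoc, ← D.map_comp] at this ⊢
      simpa using this
    · simp only [Category.assoc, ← D.map_comp] at ht₂ ⊢
      simpa using ht₂

/-- A filtered presentation of `X` by finitely presented objects. -/
structure Pres (X : 𝒞) where
  J : Type v
  cat : SmallCategory J
  filt : IsFiltered J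
  D : J ⥤ 𝒞
  ι : ∀ j, D.obj j ⟶ X
  w : ∀ {j j'} (t : j ⟶ j'), D.map t ≫ ι j' = ι j
  fp : ∀ j, IsFinPres (D.obj j)
  isColimit : IsColimit (Cocone.mk X
    { app := ι, naturality := fun {j j'} t => by simpa using w t })

attribute [instance] Pres.cat Pres.filt

noncomputable def Pres.cocone {X : 𝒞} (P : Pres X) : Cocone P.D :=
  Cocone.mk X { app := P.ι, naturality := fun {j j'} t => by simpa using P.w t }

lemma nonempty_pres [IsLFP 𝒞] (X : 𝒞) : Nonempty (Pres X) := by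
  obtain ⟨S, _, hfp, hgen⟩ := IsLFP.exists_gen (𝒞 := 𝒞)
  obtain ⟨J, _, _, D, c, ⟨hc⟩, hpt, hS⟩ := hgen X
  refine ⟨⟨J, ‹_›, ‹_›, D, fun j => c.ι.app j ≫ eqToHom hpt,
    fun {j j'} t => by rw [← Category.assoc, c.w], fun j => hfp _ (hS j), ?_⟩⟩
  refine IsColimit.ofIsoColimit hc (Cocones.ext (eqToIso hpt) (fun j => rfl))

lemma Pres.factors_s11 {X : 𝒞} (P : Pres X) {K : 𝒞} (hK : IsFinPres K) (p : K ⟶ X) :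
    ∃ (j : P.J) (p' : K ⟶ P.D.obj j), p' ≫ P.ι j = p :=
  hK.factors_s11 P.isColimit p

lemma Pres.eventuallyEq {X : 𝒞} (P : Pres X) {K : 𝒞} (hK : IsFinPres K) {j : P.J}
    (p q : K ⟶ P.D.obj j) (h : p ≫ P.ι j = q ≫ P.ι j) :
    ∃ (j' : P.J) (t : j ⟶ j'), p ≫ P.D.map t = q ≫ P.D.map t :=
  hK.eventuallyEq P.isColimit p q h

/-- Composing two coslice-generating maps out of `B` via a pushout stays in the generator. -/
lemma InGen.pushout_comp [HasColimits 𝒞] {B Y₁ Y₂ : 𝒞} {l₁ : B ⟶ Y₁} {l₂ : B ⟶ Y₂}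
    (h₁ : InGen l₁) (h₂ : InGen l₂) : InGen (l₁ ≫ pushout.inl l₁ l₂) := by
  obtain ⟨K₁, K₁', hK₁, hK₁', k₁, a₁, c₁, hP₁⟩ := h₁
  obtain ⟨K₂, K₂', hK₂, hK₂', k₂, a₂, c₂, hP₂⟩ := h₂
  refine ⟨K₁ ⨿ K₂, K₁' ⨿ K₂', hK₁.coprod hK₂, hK₁'.coprod hK₂', coprod.map k₁ k₂,
    coprod.desc a₁ a₂,
    coprod.desc (c₁ ≫ pushout.inl l₁ l₂) (c₂ ≫ pushout.inr l₁ l₂), ?_⟩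
  have comm : coprod.desc a₁ a₂ ≫ l₁ ≫ pushout.inl l₁ l₂
      = coprod.map k₁ k₂ ≫ coprod.desc (c₁ ≫ pushout.inl l₁ l₂)
        (c₂ ≫ pushout.inr l₁ l₂) := by
    apply coprod.hom_ext
    · simp only [coprod.inl_desc_assoc, coprod.map_desc, coprod.inl_desc, ← Category.assoc, hP₁.w]
    · simp only [coprod.inr_desc_assoc, coprod.map_desc, coprod.inr_desc]
      rw [pushout.condition, ← Category.assoc, hP₂.w, Category.assoc]
  refine IsPushout.of_isColimit' ⟨comm⟩ (PushoutCocone.IsColimit.mk _ ?_ ?_ ?_ ?_)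
  · intro s
    have w₁ : a₁ ≫ s.inl = k₁ ≫ coprod.inl ≫ s.inr := by
      have := coprod.inl ≫= s.condition
      simpa using this
    have w₂ : a₂ ≫ s.inl = k₂ ≫ coprod.inr ≫ s.inr := by
      have := coprod.inr ≫= s.condition
      simpa using this
    exact pushout.desc (hP₁.desc s.inl (coprod.inl ≫ s.inr) w₁)
      (hP₂.desc s.inl (coprod.inr ≫ s.inr) w₂) (by rw [hP₁.inl_desc, hP₂.inl_desc])
  · intro s
    simp only [Category.assoc, pushout.inl_desc, hP₁.inl_desc]
  · intro s
    apply coprod.hom_ext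
    · simp only [coprod.inl_desc_assoc, Category.assoc, pushout.inl_desc, hP₁.inr_desc,
        coprod.inl_desc]
    · simp only [coprod.inr_desc_assoc, Category.assoc, pushout.inr_desc, hP₂.inr_desc,
        coprod.inr_desc]
  · intro s m hm₁ hm₂
    have hml := coprod.inl ≫= hm₂
    have hmr := coprod.inr ≫= hm₂
    simp only [coprod.inl_desc_assoc, coprod.inr_desc_assoc] at hml hmr
    apply pushout.hom_ext
    · rw [pushout.inl_desc]
      apply hP₁.hom_ext
      · rw [← Category.assoc, hP₁.inl_desc]
        simpa using hm₁
      · rw [← Category.assoc, hP₁.inr_desc]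
        simpa using hml
    · rw [pushout.inr_desc]
      apply hP₂.hom_ext
      · rw [← Category.assoc, hP₂.inl_desc]
        rw [← pushout.condition]
        simpa using hm₁
      · rw [← Category.assoc, hP₂.inr_desc]
        simpa using hmr

end Helpers

section Approx

set_option linter.unusedSectionVars false

variable {𝒞 : Type u} [Category.{v} 𝒞] [HasColimits 𝒞]
variable {B : 𝒞} (PB : Pres B) {K₂ K₂' Y₂ : 𝒞} {k₂ : K₂ ⟶ K₂'} {a₂ : K₂ ⟶ B}
  {l₂ : B ⟶ Y₂} {c₂ : K₂' ⟶ Y₂} (hP₂ : IsPushout a₂ k₂ l₂ c₂)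
  {i₀ : PB.J} (α₀ : K₂ ⟶ PB.D.obj i₀) (hα₀ : α₀ ≫ PB.ι i₀ = a₂)

/-- The compatible maps `K₂ ⟶ D i` for `i` under `i₀`. -/
def alpha (m : Under i₀) : K₂ ⟶ PB.D.obj m.right := α₀ ≫ PB.D.map m.hom

variable (k₂) in
lemma alpha_natural {m m' : Under i₀} (φ : m ⟶ m') :
    alpha PB α₀ m ≫ PB.D.map φ.right = alpha PB α₀ m' := by
  rw [alpha, alpha, Category.assoc, ← PB.D.map_comp, Under.w φ]

include hα₀ in
lemma alpha_ι (m : Under i₀) : alpha PB α₀ m ≫ PB.ι m.right = a₂ := by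
  rw [alpha, Category.assoc, PB.w, hα₀]

/-- The diagram of "finite approximations" of the pushout `Y₂ = B ⊔_{K₂} K₂'`. -/
noncomputable abbrev PP (k₂ : K₂ ⟶ K₂') : Under i₀ ⥤ 𝒞 where
  obj m := pushout (alpha PB α₀ m) k₂
  map {m m'} φ := pushout.desc (PB.D.map φ.right ≫ pushout.inl _ _) (pushout.inr _ _)
    (by rw [← Category.assoc, alpha_natural, pushout.condition])
  map_id m := by
    apply pushout.hom_ext <;> simp
  map_comp {m m' m''} φ ψ := by
    apply pushout.hom_ext <;> simp

include hP₂ hα₀ in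
lemma PP_comm (m : Under i₀) :
    alpha PB α₀ m ≫ PB.ι m.right ≫ l₂ = k₂ ≫ c₂ := by
  rw [← Category.assoc, alpha_ι PB α₀ hα₀, hP₂.w]

/-- The canonical cocone from the approximations to `Y₂`. -/
noncomputable abbrev PPcocone : Cocone (PP PB α₀ k₂) where
  pt := Y₂
  ι :=
    { app := fun m => pushout.desc (PB.ι m.right ≫ l₂) c₂ (PP_comm PB hP₂ α₀ hα₀ m)
      naturality := fun {m m'} φ => by
        apply pushout.hom_ext
        · simp only [PP, Functor.const_obj_obj, Functor.const_obj_map, Category.comp_id,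
            pushout.inl_desc, pushout.inl_desc_assoc, Category.assoc]
          rw [← Category.assoc, PB.w]
        · simp [PP] }

lemma PPcocone_inl (m : Under i₀) :
    pushout.inl _ _ ≫ (PPcocone PB hP₂ α₀ hα₀).ι.app m = PB.ι m.right ≫ l₂ := by
  simp [PPcocone]

lemma PPcocone_inr (m : Under i₀) :
    pushout.inr _ _ ≫ (PPcocone PB hP₂ α₀ hα₀).ι.app m = c₂ := by
  simp [PPcocone]

/-- Restriction of the presentation of `B` to `Under i₀` is still colimiting. -/
noncomputable def PBwhisker : IsColimit (PB.cocone.whisker (Under.forget i₀)) :=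
  (Functor.Final.isColimitWhiskerEquiv (Under.forget i₀) PB.cocone).symm PB.isColimit

/-- Any cocone under the approximations: the map out of `B`. -/
noncomputable def PPz (T : Cocone (PP PB α₀ k₂)) : B ⟶ T.pt :=
  (PBwhisker PB (i₀ := i₀)).desc
    { pt := T.pt
      ι :=
        { app := fun m => pushout.inl _ _ ≫ T.ι.app m
          naturality := fun {m m'} φ => by
            have h : pushout.inl _ _ ≫ (PP PB α₀ k₂).map φ
                = PB.D.map φ.right ≫ pushout.inl _ _ := by simp [PP]
            have hT := T.w φ
            show PB.D.map φ.right ≫ pushout.inl _ _ ≫ T.ι.app m'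
                = (pushout.inl _ _ ≫ T.ι.app m) ≫ 𝟙 _
            rw [Category.comp_id, ← hT, ← Category.assoc, ← h, Category.assoc] } }

lemma PPz_ι (T : Cocone (PP PB α₀ k₂)) (m : Under i₀) :
    PB.ι m.right ≫ PPz PB α₀ T = pushout.inl _ _ ≫ T.ι.app m :=
  (PBwhisker PB (i₀ := i₀)).fac _ m

lemma PP_inr_const (T : Cocone (PP PB α₀ k₂)) (m : Under i₀) :
    pushout.inr _ _ ≫ T.ι.app m = pushout.inr _ _ ≫ T.ι.app (Under.mk (𝟙 i₀)) := by
  have h := T.w (Under.homMk m.hom (by simp) : Under.mk (𝟙 i₀) ⟶ m)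
  rw [← h, ← Category.assoc]
  congr 1
  simp [PP]

include hα₀ in
lemma PPz_compat (T : Cocone (PP PB α₀ k₂)) :
    a₂ ≫ PPz PB α₀ T = k₂ ≫ pushout.inr _ _ ≫ T.ι.app (Under.mk (𝟙 i₀)) := by
  have h1 : a₂ = alpha PB α₀ (Under.mk (𝟙 i₀)) ≫ PB.ι (Under.mk (𝟙 i₀)).right :=
    (alpha_ι PB α₀ hα₀ _).symm
  rw [h1, Category.assoc, PPz_ι, ← Category.assoc, pushout.condition, Category.assoc]

/-- `Y₂` is the filtered colimit of its finite approximations. -/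
noncomputable def PPisColimit : IsColimit (PPcocone PB hP₂ α₀ hα₀) where
  desc T := hP₂.desc (PPz PB α₀ T) (pushout.inr _ _ ≫ T.ι.app (Under.mk (𝟙 i₀)))
    (PPz_compat PB α₀ hα₀ T)
  fac T m := by
    dsimp only
    apply pushout.hom_ext
    · rw [← Category.assoc, PPcocone_inl PB hP₂ α₀ hα₀, Category.assoc, hP₂.inl_desc, PPz_ι]
    · rw [← Category.assoc, PPcocone_inr PB hP₂ α₀ hα₀, hP₂.inr_desc]
      exact (PP_inr_const PB α₀ T m).symm
  uniq T Θ hΘ := by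
    dsimp only
    apply hP₂.hom_ext
    · rw [hP₂.inl_desc]
      apply (PBwhisker PB (i₀ := i₀)).hom_ext
      intro m
      show PB.ι m.right ≫ l₂ ≫ Θ = PB.ι m.right ≫ PPz PB α₀ T
      calc PB.ι m.right ≫ l₂ ≫ Θ
          = (PB.ι m.right ≫ l₂) ≫ Θ := by rw [Category.assoc]
        _ = (pushout.inl _ _ ≫ (PPcocone PB hP₂ α₀ hα₀).ι.app m) ≫ Θ := by
            rw [PPcocone_inl PB hP₂ α₀ hα₀]
        _ = pushout.inl _ _ ≫ T.ι.app m := by rw [Category.assoc, hΘ m]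
        _ = PB.ι m.right ≫ PPz PB α₀ T := (PPz_ι PB α₀ T m).symm
    · rw [hP₂.inr_desc, ← hΘ (Under.mk (𝟙 i₀)), ← Category.assoc, PPcocone_inr PB hP₂ α₀ hα₀]

end Approx

section Crux

variable {𝒞 : Type u} [Category.{v} 𝒞] [HasColimits 𝒞]

/-- Core construction: coequalizing object built from a finite approximation `Pm` of
`Y₂ = B ⊔_{K₂} K₂'` and a map `s` to a finitely presented object `Dj` over `C`. -/
lemma crux_core {B C Y₂ Pm Bi Dj K₂ K₂' : 𝒞} {a₂ : K₂ ⟶ B} {k₂ : K₂ ⟶ K₂'} {l₂ : B ⟶ Y₂}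
    {c₂ : K₂' ⟶ Y₂} (hP₂ : IsPushout a₂ k₂ l₂ c₂)
    (hBi : IsFinPres Bi) (hDj : IsFinPres Dj)
    {αm : K₂ ⟶ Bi} {pinl : Bi ⟶ Pm} {pinr : K₂' ⟶ Pm} (hPm : IsPushout αm k₂ pinl pinr)
    {bι : Bi ⟶ B} (hba : αm ≫ bι = a₂)
    (e : Pm ⟶ Y₂) (hinl_e : pinl ≫ e = bι ≫ l₂) (hinr_e : pinr ≫ e = c₂)
    {g₂ : Y₂ ⟶ C} (s : Pm ⟶ Dj) {ιj : Dj ⟶ C} (hs : s ≫ ιj = e ≫ g₂) :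
    InGen (l₂ ≫ pushout.inl e s) ∧ pushout.inl e s ≫ pushout.desc g₂ ιj hs.symm = g₂ := by
  constructor
  · refine ⟨Bi, Dj, hBi, hDj, pinl ≫ s, bι, pushout.inr e s, ?_⟩
    have comm : bι ≫ l₂ ≫ pushout.inl e s = (pinl ≫ s) ≫ pushout.inr e s := by
      rw [← Category.assoc, ← hinl_e, Category.assoc, Category.assoc, pushout.condition]
    refine IsPushout.of_isColimit' ⟨comm⟩ (PushoutCocone.IsColimit.mk _ ?_ ?_ ?_ ?_)
    · intro sc
      have hw : a₂ ≫ sc.inl = k₂ ≫ pinr ≫ s ≫ sc.inr := by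
        calc a₂ ≫ sc.inl = αm ≫ bι ≫ sc.inl := by rw [← hba, Category.assoc]
          _ = αm ≫ (pinl ≫ s) ≫ sc.inr := by rw [sc.condition]
          _ = (αm ≫ pinl) ≫ s ≫ sc.inr := by simp only [Category.assoc]
          _ = (k₂ ≫ pinr) ≫ s ≫ sc.inr := by rw [hPm.w]
          _ = k₂ ≫ pinr ≫ s ≫ sc.inr := by rw [Category.assoc]
      have hey : e ≫ hP₂.desc sc.inl (pinr ≫ s ≫ sc.inr) hw = s ≫ sc.inr := by
        apply hPm.hom_ext
        · rw [← Category.assoc, hinl_e, Category.assoc, hP₂.inl_desc, ← Category.assoc,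
            ← sc.condition]
        · rw [← Category.assoc, hinr_e, hP₂.inr_desc]
      exact pushout.desc (hP₂.desc sc.inl (pinr ≫ s ≫ sc.inr) hw) sc.inr hey
    · intro sc
      rw [Category.assoc, pushout.inl_desc, hP₂.inl_desc]
    · intro sc
      rw [pushout.inr_desc]
    · intro sc m' hm₁ hm₂
      apply pushout.hom_ext
      · rw [pushout.inl_desc]
        apply hP₂.hom_ext
        · rw [hP₂.inl_desc, ← Category.assoc]
          exact hm₁
        · rw [hP₂.inr_desc]
          have hc : c₂ ≫ pushout.inl e s = pinr ≫ s ≫ pushout.inr e s := by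
            rw [← hinr_e, Category.assoc, pushout.condition]
          calc c₂ ≫ pushout.inl e s ≫ m'
              = (c₂ ≫ pushout.inl e s) ≫ m' := by rw [Category.assoc]
            _ = (pinr ≫ s ≫ pushout.inr e s) ≫ m' := by rw [hc]
            _ = pinr ≫ s ≫ pushout.inr e s ≫ m' := by simp only [Category.assoc]
            _ = pinr ≫ s ≫ sc.inr := by rw [hm₂]
      · rw [pushout.inr_desc]
        exact hm₂
  · rw [pushout.inl_desc]

lemma crux {B C : 𝒞} (PB : Pres B) (PC : Pres C) (fhom : B ⟶ C)
    {Y₂ : 𝒞} {l₂ : B ⟶ Y₂} (hl₂ : InGen l₂) {g₂ : Y₂ ⟶ C} (hg₂ : l₂ ≫ g₂ = fhom)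
    {K' : 𝒞} (hK' : IsFinPres K') (p q : K' ⟶ Y₂) (hpq : p ≫ g₂ = q ≫ g₂) :
    ∃ (Y₃ : 𝒞) (χ : Y₂ ⟶ Y₃) (g₃ : Y₃ ⟶ C),
      InGen (l₂ ≫ χ) ∧ χ ≫ g₃ = g₂ ∧ p ≫ χ = q ≫ χ := by
  obtain ⟨K₂, K₂', hK₂, hK₂', k₂, a₂, c₂, hP₂⟩ := hl₂
  obtain ⟨i₀, α₀, hα₀⟩ := PB.factors_s11 hK₂ a₂
  have hcol := PPisColimit PB hP₂ α₀ hα₀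
  obtain ⟨m₁, p₁, hp₁⟩ := hK'.factors_s11 hcol p
  obtain ⟨m₂, q₁, hq₁⟩ := hK'.factors_s11 hcol q
  obtain ⟨m₃, p₂, q₂, hp₂, hq₂⟩ : ∃ (m₃ : Under i₀) (p₂ q₂ : K' ⟶ (PP PB α₀ k₂).obj m₃),
      p₂ ≫ (PPcocone PB hP₂ α₀ hα₀).ι.app m₃ = p
        ∧ q₂ ≫ (PPcocone PB hP₂ α₀ hα₀).ι.app m₃ = q := by
    refine ⟨IsFiltered.max m₁ m₂, p₁ ≫ (PP PB α₀ k₂).map (IsFiltered.leftToMax m₁ m₂),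
      q₁ ≫ (PP PB α₀ k₂).map (IsFiltered.rightToMax m₁ m₂), ?_, ?_⟩
    · rw [Category.assoc, Cocone.w]; exact hp₁
    · rw [Category.assoc, Cocone.w]; exact hq₁
  obtain ⟨j₅, s, hs, hpqs⟩ : ∃ (j₅ : PC.J) (s : (PP PB α₀ k₂).obj m₃ ⟶ PC.D.obj j₅),
      s ≫ PC.ι j₅ = (PPcocone PB hP₂ α₀ hα₀).ι.app m₃ ≫ g₂ ∧ p₂ ≫ s = q₂ ≫ s := by
    obtain ⟨j₁, u₁, hu₁⟩ := PC.factors_s11 (PB.fp m₃.right) (PB.ι m₃.right ≫ fhom)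
    obtain ⟨j₂, v₁, hv₁⟩ := PC.factors_s11 hK₂' (c₂ ≫ g₂)
    have hu₃ : (u₁ ≫ PC.D.map (IsFiltered.leftToMax j₁ j₂)) ≫ PC.ι (IsFiltered.max j₁ j₂)
        = PB.ι m₃.right ≫ fhom := by rw [Category.assoc, PC.w, hu₁]
    have hv₃ : (v₁ ≫ PC.D.map (IsFiltered.rightToMax j₁ j₂)) ≫ PC.ι (IsFiltered.max j₁ j₂)
        = c₂ ≫ g₂ := by rw [Category.assoc, PC.w, hv₁]
    have hcompat : (alpha PB α₀ m₃ ≫ (u₁ ≫ PC.D.map (IsFiltered.leftToMax j₁ j₂)))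
          ≫ PC.ι (IsFiltered.max j₁ j₂)
        = (k₂ ≫ (v₁ ≫ PC.D.map (IsFiltered.rightToMax j₁ j₂)))
          ≫ PC.ι (IsFiltered.max j₁ j₂) := by
      calc (alpha PB α₀ m₃ ≫ (u₁ ≫ PC.D.map (IsFiltered.leftToMax j₁ j₂)))
            ≫ PC.ι (IsFiltered.max j₁ j₂)
          = alpha PB α₀ m₃ ≫ PB.ι m₃.right ≫ fhom := by rw [Category.assoc, hu₃]
        _ = a₂ ≫ fhom := by rw [← Category.assoc, alpha_ι PB α₀ hα₀]
        _ = (a₂ ≫ l₂) ≫ g₂ := by rw [Category.assoc, hg₂]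
        _ = (k₂ ≫ c₂) ≫ g₂ := by rw [hP₂.w]
        _ = (k₂ ≫ (v₁ ≫ PC.D.map (IsFiltered.rightToMax j₁ j₂)))
              ≫ PC.ι (IsFiltered.max j₁ j₂) := by
            rw [Category.assoc, Category.assoc, hv₃]
    obtain ⟨j₄, t, ht⟩ := PC.eventuallyEq hK₂ _ _ hcompat
    have hcomm₄ : alpha PB α₀ m₃ ≫ (u₁ ≫ PC.D.map (IsFiltered.leftToMax j₁ j₂)) ≫ PC.D.map t
        = k₂ ≫ (v₁ ≫ PC.D.map (IsFiltered.rightToMax j₁ j₂)) ≫ PC.D.map t := by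
      rw [← Category.assoc, ← Category.assoc]
      simpa [Category.assoc] using ht
    have hs₀ : pushout.desc _ _ hcomm₄ ≫ PC.ι j₄
        = (PPcocone PB hP₂ α₀ hα₀).ι.app m₃ ≫ g₂ := by
      apply pushout.hom_ext
      · rw [← Category.assoc, pushout.inl_desc, Category.assoc, PC.w, hu₃, ← Category.assoc,
          PPcocone_inl PB hP₂ α₀ hα₀ m₃, Category.assoc, hg₂]
      · rw [← Category.assoc, pushout.inr_desc, Category.assoc, PC.w, hv₃, ← Category.assoc,
          PPcocone_inr PB hP₂ α₀ hα₀ m₃]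
    have hps : (p₂ ≫ pushout.desc _ _ hcomm₄) ≫ PC.ι j₄
        = (q₂ ≫ pushout.desc _ _ hcomm₄) ≫ PC.ι j₄ := by
      rw [Category.assoc, hs₀, Category.assoc, hs₀, ← Category.assoc, ← Category.assoc,
        hp₂, hq₂, hpq]
    obtain ⟨j₅, t', ht'⟩ := PC.eventuallyEq hK' _ _ hps
    refine ⟨j₅, pushout.desc _ _ hcomm₄ ≫ PC.D.map t', ?_, ?_⟩
    · rw [Category.assoc, PC.w]; exact hs₀
    · rw [← Category.assoc, ← Category.assoc]
      simpa [Category.assoc] using ht'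
  obtain ⟨hIn, hχ⟩ := crux_core hP₂ (PB.fp m₃.right) (PC.fp j₅)
    (IsPushout.of_hasPushout (alpha PB α₀ m₃) k₂) (alpha_ι PB α₀ hα₀ m₃)
    ((PPcocone PB hP₂ α₀ hα₀).ι.app m₃) (PPcocone_inl PB hP₂ α₀ hα₀ m₃)
    (PPcocone_inr PB hP₂ α₀ hα₀ m₃) s hs
  refine ⟨_, _, _, hIn, hχ, ?_⟩
  rw [← hp₂, ← hq₂, Category.assoc, Category.assoc, pushout.condition,
    ← Category.assoc, ← Category.assoc, hpqs]

end Crux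


variable {ℬ : Type u} [Category.{v} ℬ] {B : ℬ}

/-- The coslice generator `𝒢_B`, as a full subcategory of `Under B`. -/
abbrev CosliceGen (B : ℬ) := ObjectProperty.FullSubcategory (fun l : Under B => InGen l.hom)

/-- The inclusion `𝒢_B ⥤ B↓ℬ`. -/
abbrev cosliceGenIncl (B : ℬ) : CosliceGen B ⥤ Under B := ObjectProperty.ι _

/-- The canonical cocone on the projection `𝒢_B ↓ f ⥤ B↓ℬ`, with vertex `f`. -/
def canonicalCocone (f : Under B) :
    Cocone (CostructuredArrow.proj (cosliceGenIncl B) f ⋙ cosliceGenIncl B) where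
  pt := f
  ι :=
    { app := fun X => X.hom
      naturality := fun X Y η => by
        exact (CostructuredArrow.w η).trans (Category.comp_id X.hom).symm }

section Main

variable (f : Under B)

/-- Build an object of `𝒢_B ↓ f`. -/
abbrev mkE {Y : ℬ} (l : B ⟶ Y) (hl : InGen l) (g : Y ⟶ f.right) (hg : l ≫ g = f.hom) :
    CostructuredArrow (cosliceGenIncl B) f :=
  CostructuredArrow.mk (Y := (⟨Under.mk l, hl⟩ : CosliceGen B))
    (Under.homMk g (by simpa using hg))

/-- Build a morphism of `𝒢_B ↓ f`. -/
def mkEhom (X X' : CostructuredArrow (cosliceGenIncl B) f)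
    (χ : X.left.obj.right ⟶ X'.left.obj.right)
    (hw1 : X.left.obj.hom ≫ χ = X'.left.obj.hom)
    (hw2 : χ ≫ X'.hom.right = X.hom.right) : X ⟶ X' :=
  CostructuredArrow.homMk (ObjectProperty.homMk (Under.homMk χ hw1))
    (Under.UnderMorphism.ext (by simpa using hw2))

lemma Ew {X X' : CostructuredArrow (cosliceGenIncl B) f} (η : X ⟶ X') :
    η.left.hom.right ≫ X'.hom.right = X.hom.right := by
  have h := congrArg Under.Hom.right (CostructuredArrow.w η)
  simpa using h

lemma Ew' (X : CostructuredArrow (cosliceGenIncl B) f) :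
    X.left.obj.hom ≫ X.hom.right = f.hom := Under.w X.hom

lemma gen_filtered [IsLFP ℬ] : IsFiltered (CostructuredArrow (cosliceGenIncl B) f) := by
  obtain ⟨PB⟩ := nonempty_pres B
  obtain ⟨PC⟩ := nonempty_pres f.right
  have hne : Nonempty (CostructuredArrow (cosliceGenIncl B) f) := by
    obtain ⟨i₀⟩ := IsFiltered.nonempty (C := PB.J)
    exact ⟨mkE f (𝟙 B) ⟨PB.D.obj i₀, PB.D.obj i₀, PB.fp i₀, PB.fp i₀, 𝟙 _, PB.ι i₀, PB.ι i₀,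
      IsPushout.of_vert_isIso ⟨by simp⟩⟩ f.hom (by simp)⟩
  have hfe : IsFilteredOrEmpty (CostructuredArrow (cosliceGenIncl B) f) := by
    constructor
    · intro X₁ X₂
      refine ⟨mkE f (X₁.left.obj.hom ≫ pushout.inl X₁.left.obj.hom X₂.left.obj.hom)
        (X₁.left.property.pushout_comp X₂.left.property)
        (pushout.desc X₁.hom.right X₂.hom.right (by rw [Ew' f X₁, Ew' f X₂]))
        (by rw [Category.assoc, pushout.inl_desc, Ew' f X₁]), ?_, ?_, trivial⟩
      · exact mkEhom f _ _ (pushout.inl _ _) rfl (by simp [mkE])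
      · exact mkEhom f _ _ (pushout.inr _ _) pushout.condition.symm (by simp [mkE])
    · intro X₁ X₂ η ζ
      obtain ⟨K₁, K₁', hK₁, hK₁', k₁, a₁, c₁, hP₁⟩ := X₁.left.property
      obtain ⟨Y₃, χ, g₃, hIn, hχg, hpqχ⟩ := crux PB PC f.hom X₂.left.property (Under.w X₂.hom)
        hK₁' (c₁ ≫ η.left.hom.right) (c₁ ≫ ζ.left.hom.right)
        (by rw [Category.assoc, Ew f η, Category.assoc, Ew f ζ])
      refine ⟨mkE f (X₂.left.obj.hom ≫ χ) hIn g₃ (by rw [Category.assoc, hχg, Ew' f X₂]),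
        mkEhom f _ _ χ rfl (by simp [mkE, hχg]), ?_⟩
      apply CostructuredArrow.hom_ext
      apply ObjectProperty.hom_ext
      apply Under.UnderMorphism.ext
      show η.left.hom.right ≫ χ = ζ.left.hom.right ≫ χ
      apply hP₁.hom_ext
      · rw [← Category.assoc, ← Category.assoc, Under.w η.left.hom, Under.w ζ.left.hom]
      · simpa [Category.assoc] using hpqχ
  exact { toIsFilteredOrEmpty := hfe, nonempty := hne }

section Colimit

variable [IsLFP ℬ] (PB : Pres B) (PC : Pres f.right) (i₀ : PB.J)

/-- The objects `B ⊔ D j` of `𝒢_B ↓ f`, for `D` a presentation of the codomain of `f`. -/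
noncomputable abbrev Gobj (j : PC.J) : CostructuredArrow (cosliceGenIncl B) f :=
  mkE f (pushout.inl (PB.ι i₀) (coprod.inl : PB.D.obj i₀ ⟶ PB.D.obj i₀ ⨿ PC.D.obj j))
    ⟨PB.D.obj i₀, PB.D.obj i₀ ⨿ PC.D.obj j, PB.fp i₀, (PB.fp i₀).coprod (PC.fp j),
      coprod.inl, PB.ι i₀, pushout.inr _ _, IsPushout.of_hasPushout _ _⟩
    (pushout.desc f.hom (coprod.desc (PB.ι i₀ ≫ f.hom) (PC.ι j)) (by simp))
    (by rw [pushout.inl_desc])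

/-- The inclusion of `D j` into `B ⊔ D j`. -/
noncomputable def inrD (j : PC.J) : PC.D.obj j ⟶ (Gobj f PB PC i₀ j).left.obj.right :=
  coprod.inr ≫ pushout.inr _ _

lemma inrD_g (j : PC.J) : inrD f PB PC i₀ j ≫ (Gobj f PB PC i₀ j).hom.right = PC.ι j := by
  simp [Gobj, mkE, inrD]

/-- Transition maps between the objects `B ⊔ D j`. -/
noncomputable def Gmap {j j' : PC.J} (t : j ⟶ j') : Gobj f PB PC i₀ j ⟶ Gobj f PB PC i₀ j' :=
  mkEhom f _ _
    (pushout.desc (pushout.inl _ _)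
      (coprod.map (𝟙 _) (PC.D.map t) ≫ pushout.inr _ _)
      (by rw [← Category.assoc, coprod.inl_map, Category.id_comp, ← pushout.condition]))
    (by simp [Gobj, mkE])
    (by
      apply pushout.hom_ext
      · simp [Gobj, mkE]
      · simp [Gobj, mkE]
        rw [PC.w])

lemma inrD_Gmap {j j' : PC.J} (t : j ⟶ j') :
    inrD f PB PC i₀ j ≫ (Gmap f PB PC i₀ t).left.hom.right
      = PC.D.map t ≫ inrD f PB PC i₀ j' := by
  simp [inrD, Gmap, mkEhom]

variable {f}

/-- Structure map compatibility for components of a cocone on the canonical diagram. -/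
lemma Zw (Z : Cocone (CostructuredArrow.proj (cosliceGenIncl B) f ⋙ cosliceGenIncl B))
    (X : CostructuredArrow (cosliceGenIncl B) f) :
    X.left.obj.hom ≫ (Z.ι.app X).right = Z.pt.hom := Under.w (Z.ι.app X)

lemma Znat (Z : Cocone (CostructuredArrow.proj (cosliceGenIncl B) f ⋙ cosliceGenIncl B))
    {X X' : CostructuredArrow (cosliceGenIncl B) f} (η : X ⟶ X') :
    η.left.hom.right ≫ (Z.ι.app X').right = (Z.ι.app X).right := by
  have h := congrArg Under.Hom.right (Z.w η)
  exact h

variable (f)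

/-- The candidate factorization `f.right ⟶ Z.pt.right`. -/
noncomputable def descAux (Z : Cocone (CostructuredArrow.proj (cosliceGenIncl B) f
    ⋙ cosliceGenIncl B)) : f.right ⟶ Z.pt.right :=
  PC.isColimit.desc
    { pt := Z.pt.right
      ι :=
        { app := fun j => inrD f PB PC i₀ j ≫ (Z.ι.app (Gobj f PB PC i₀ j)).right
          naturality := fun {j j'} t => by
            have h := Znat Z (Gmap f PB PC i₀ t)
            show PC.D.map t ≫ inrD f PB PC i₀ j' ≫ (Z.ι.app (Gobj f PB PC i₀ j')).right
              = (inrD f PB PC i₀ j ≫ (Z.ι.app (Gobj f PB PC i₀ j)).right) ≫ 𝟙 _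
            erw [Category.comp_id, ← h, ← Category.assoc (inrD f PB PC i₀ j), inrD_Gmap]
            exact (Category.assoc (obj := ℬ) _ _ _).symm } }

lemma descAux_fac (Z : Cocone (CostructuredArrow.proj (cosliceGenIncl B) f
    ⋙ cosliceGenIncl B)) (j : PC.J) :
    PC.ι j ≫ descAux f PB PC i₀ Z
      = inrD f PB PC i₀ j ≫ (Z.ι.app (Gobj f PB PC i₀ j)).right :=
  PC.isColimit.fac _ j

/-- The auxiliary objects `B ⊔_{D_B i} D j`. -/
noncomputable abbrev Robj (i : PB.J) (j : PC.J) (τ : PB.D.obj i ⟶ PC.D.obj j)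
    (hτ : τ ≫ PC.ι j = PB.ι i ≫ f.hom) : CostructuredArrow (cosliceGenIncl B) f :=
  mkE f (pushout.inl (PB.ι i) τ)
    ⟨PB.D.obj i, PC.D.obj j, PB.fp i, PC.fp j, τ, PB.ι i, pushout.inr _ _,
      IsPushout.of_hasPushout _ _⟩
    (pushout.desc f.hom (PC.ι j) (by rw [hτ]))
    (by rw [pushout.inl_desc])

/-- The comparison morphism `B ⊔ D j ⟶ B ⊔_{D_B i} D j`. -/
noncomputable def GtoR (i : PB.J) (j : PC.J) (τ : PB.D.obj i ⟶ PC.D.obj j)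
    (hτ : τ ≫ PC.ι j = PB.ι i ≫ f.hom) : Gobj f PB PC i₀ j ⟶ Robj f PB PC i j τ hτ :=
  mkEhom f _ _
    (pushout.desc (pushout.inl _ _)
      (coprod.desc (PB.ι i₀ ≫ pushout.inl _ _) (pushout.inr _ _)) (by simp))
    (by simp [Gobj, Robj, mkE])
    (by
      apply pushout.hom_ext
      · simp [Gobj, Robj, mkE]
      · apply coprod.hom_ext <;> simp [Gobj, Robj, mkE])

lemma inrD_GtoR (i : PB.J) (j : PC.J) (τ : PB.D.obj i ⟶ PC.D.obj j)
    (hτ : τ ≫ PC.ι j = PB.ι i ≫ f.hom) :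
    inrD f PB PC i₀ j ≫ (GtoR f PB PC i₀ i j τ hτ).left.hom.right = pushout.inr (PB.ι i) τ := by
  simp [inrD, GtoR, mkEhom]

lemma descAux_w (Z : Cocone (CostructuredArrow.proj (cosliceGenIncl B) f
    ⋙ cosliceGenIncl B)) : f.hom ≫ descAux f PB PC i₀ Z = Z.pt.hom := by
  apply PB.isColimit.hom_ext
  intro i
  obtain ⟨j, τ, hτ⟩ := PC.factors_s11 (PB.fp i) (PB.ι i ≫ f.hom)
  show PB.ι i ≫ f.hom ≫ descAux f PB PC i₀ Z = PB.ι i ≫ Z.pt.hom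
  calc PB.ι i ≫ f.hom ≫ descAux f PB PC i₀ Z
      = τ ≫ PC.ι j ≫ descAux f PB PC i₀ Z := by
        rw [← Category.assoc, ← hτ, Category.assoc]
    _ = τ ≫ inrD f PB PC i₀ j ≫ (Z.ι.app (Gobj f PB PC i₀ j)).right := by
        rw [descAux_fac]
    _ = τ ≫ inrD f PB PC i₀ j ≫ (GtoR f PB PC i₀ i j τ hτ).left.hom.right
          ≫ (Z.ι.app (Robj f PB PC i j τ hτ)).right := by
        rw [Znat Z (GtoR f PB PC i₀ i j τ hτ)]
    _ = τ ≫ pushout.inr (PB.ι i) τ ≫ (Z.ι.app (Robj f PB PC i j τ hτ)).right := by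
        erw [← Category.assoc (inrD f PB PC i₀ j), inrD_GtoR]
    _ = (PB.ι i ≫ pushout.inl (PB.ι i) τ) ≫ (Z.ι.app (Robj f PB PC i j τ hτ)).right := by
        erw [← Category.assoc, pushout.condition]
    _ = PB.ι i ≫ Z.pt.hom := by
        erw [Category.assoc]
        congr 1
        exact Zw Z (Robj f PB PC i j τ hτ)

section RX
variable (X : CostructuredArrow (cosliceGenIncl B) f) {K K' : ℬ}
  (hK : IsFinPres K) (hK' : IsFinPres K') (k : K ⟶ K') (a : K ⟶ B)
  (cc : K' ⟶ X.left.obj.right) (hPO : IsPushout a k X.left.obj.hom cc)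
  (j : PC.J) (t' : K' ⟶ PC.D.obj j) (ht' : t' ≫ PC.ι j = cc ≫ X.hom.right)

/-- Pushout of an object of `𝒢_B ↓ f` along a finite approximation of its cone map. -/
noncomputable abbrev RXobj : CostructuredArrow (cosliceGenIncl B) f :=
  mkE f (X.left.obj.hom ≫ pushout.inl cc t')
    ⟨K, PC.D.obj j, hK, PC.fp j, k ≫ t', a, pushout.inr cc t',
      hPO.paste_vert (IsPushout.of_hasPushout cc t')⟩
    (pushout.desc X.hom.right (PC.ι j) ht'.symm)
    (by rw [Category.assoc, pushout.inl_desc, Ew' f X])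

noncomputable def XtoRX : X ⟶ RXobj f PC X hK k a cc hPO j t' ht' :=
  mkEhom f _ _ (pushout.inl cc t') rfl (by simp [RXobj, mkE])

noncomputable def GtoRX : Gobj f PB PC i₀ j ⟶ RXobj f PC X hK k a cc hPO j t' ht' :=
  mkEhom f _ _
    (pushout.desc (X.left.obj.hom ≫ pushout.inl cc t')
      (coprod.desc (PB.ι i₀ ≫ X.left.obj.hom ≫ pushout.inl cc t') (pushout.inr cc t'))
      (by simp))
    (by simp [Gobj, RXobj, mkE])
    (by
      apply pushout.hom_ext
      · simp [Gobj, RXobj, mkE, Ew' f X]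
      · apply coprod.hom_ext
        · simp [Gobj, RXobj, mkE, Ew' f X]
        · simp [Gobj, RXobj, mkE])

lemma inrD_GtoRX :
    inrD f PB PC i₀ j ≫ (GtoRX f PB PC i₀ X hK k a cc hPO j t' ht').left.hom.right
      = pushout.inr cc t' := by
  simp [inrD, GtoRX, mkEhom]

lemma XtoRX_left : (XtoRX f PC X hK k a cc hPO j t' ht').left.hom.right = pushout.inl cc t' := rfl

end RX

lemma desc_fac (Z : Cocone (CostructuredArrow.proj (cosliceGenIncl B) f
      ⋙ cosliceGenIncl B)) (X : CostructuredArrow (cosliceGenIncl B) f) :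
    (canonicalCocone f).ι.app X ≫ Under.homMk (descAux f PB PC i₀ Z) (descAux_w f PB PC i₀ Z)
      = Z.ι.app X := by
  apply Under.UnderMorphism.ext
  show X.hom.right ≫ descAux f PB PC i₀ Z = (Z.ι.app X).right
  obtain ⟨K, K', hK, hK', k, a, cc, hPO⟩ := X.left.property
  apply hPO.hom_ext
  · rw [← Category.assoc, Ew' f X, descAux_w, Zw]
  · obtain ⟨j, t', ht'⟩ := PC.factors_s11 hK' (cc ≫ X.hom.right)
    calc cc ≫ X.hom.right ≫ descAux f PB PC i₀ Z
        = t' ≫ PC.ι j ≫ descAux f PB PC i₀ Z := by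
          rw [← Category.assoc, ← ht', Category.assoc]
      _ = t' ≫ inrD f PB PC i₀ j ≫ (Z.ι.app (Gobj f PB PC i₀ j)).right := by
          rw [descAux_fac]
      _ = t' ≫ inrD f PB PC i₀ j ≫ (GtoRX f PB PC i₀ X hK k a cc hPO j t' ht').left.hom.right
            ≫ (Z.ι.app (RXobj f PC X hK k a cc hPO j t' ht')).right := by
          rw [Znat Z (GtoRX f PB PC i₀ X hK k a cc hPO j t' ht')]
      _ = t' ≫ pushout.inr cc t'
            ≫ (Z.ι.app (RXobj f PC X hK k a cc hPO j t' ht')).right := by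
          erw [← Category.assoc (inrD f PB PC i₀ j), inrD_GtoRX]
      _ = (cc ≫ pushout.inl cc t')
            ≫ (Z.ι.app (RXobj f PC X hK k a cc hPO j t' ht')).right := by
          erw [← Category.assoc, ← pushout.condition]
      _ = cc ≫ (XtoRX f PC X hK k a cc hPO j t' ht').left.hom.right
            ≫ (Z.ι.app (RXobj f PC X hK k a cc hPO j t' ht')).right := by
          erw [Category.assoc, XtoRX_left]
      _ = cc ≫ (Z.ι.app X).right := by
          rw [Znat Z (XtoRX f PC X hK k a cc hPO j t' ht')]

include PB PC i₀ in
lemma gen_isColimit : Nonempty (IsColimit (canonicalCocone f)) := by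
  refine ⟨?_⟩
  refine
    { desc := fun Z => Under.homMk (descAux f PB PC i₀ Z) (descAux_w f PB PC i₀ Z)
      fac := fun Z X => desc_fac f PB PC i₀ Z X
      uniq := ?_ }
  intro Z m hm
  apply Under.UnderMorphism.ext
  apply PC.isColimit.hom_ext
  intro j
  show PC.ι j ≫ m.right = PC.ι j ≫ descAux f PB PC i₀ Z
  have h := congrArg Under.Hom.right (hm (Gobj f PB PC i₀ j))
  have h' : (Gobj f PB PC i₀ j).hom.right ≫ m.right = (Z.ι.app (Gobj f PB PC i₀ j)).right := by
    exact (Under.comp_right _ _ _ _ _).symm.trans h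
  erw [descAux_fac, ← inrD_g f PB PC i₀ j, Category.assoc, h']

end Colimit

end Main

/-- `𝒢_B` is a dense generator of `B↓ℬ`: every object `f` of the coslice is the colimit of
the canonical (filtered) diagram `𝒢_B ↓ f ⥤ B↓ℬ`. -/
theorem stmt11 [IsLFP ℬ] (f : Under B) :
    IsFiltered (CostructuredArrow (cosliceGenIncl B) f) ∧
      Nonempty (IsColimit (canonicalCocone f)) := by
  obtain ⟨PB⟩ := nonempty_pres B
  obtain ⟨PC⟩ := nonempty_pres f.right
  obtain ⟨i₀⟩ := IsFiltered.nonempty (C := PB.J)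
  exact ⟨gen_filtered f, gen_isColimit f PB PC i₀⟩
end

section
/- Let F* ⊣ F_* : 𝒜 → ℬ be a morphism of locally finitely presentable categories. Every object (M, B, f : F_*(M) → B) of F_*↓ℬ with M finitely presented in 𝒜 and f a pushout of a morphism k : K → K' between finitely presented objects of ℬ along some a : K → F_*(M), is a finitely presented object of the comma category F_*↓ℬ. -/
open CategoryTheory Limits Opposite

universe w v u

/-- For a morphism of LFP categories `F* ⊣ F_*`, every object `(M, B, f : F_*(M) ⟶ B)` of
the comma category `F_*↓ℬ` with `M` finitely presented and `f` a pushout of a morphism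
between finitely presented objects of `ℬ` is finitely presented in `F_*↓ℬ`. -/
theorem stmt17 {𝒜 : Type u} {ℬ : Type w} [Category.{v} 𝒜] [Category.{v} ℬ]
    [IsLFP 𝒜] [IsLFP ℬ] (Fst : 𝒜 ⥤ ℬ) (Fup : ℬ ⥤ 𝒜) (adj : Fup ⊣ Fst)
    (hcont : Nonempty (PreservesLimits Fst))
    (hfin : ∀ (J : Type v) (_ : SmallCategory J) (_ : IsFiltered J),
      Nonempty (PreservesColimitsOfShape J Fst))
    (X : Comma Fst (𝟭 ℬ)) (hM : IsFinPres X.left) (hX : InGen X.hom) :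
    IsFinPres X := by
  obtain ⟨K, K', hK, hK', k, a, c', hpo⟩ := hX
  intro J instJ filtJ
  haveI : PreservesColimitsOfShape J Fst := (hfin J instJ filtJ).some
  haveI pM : PreservesColimitsOfShape J (coyoneda.obj (op X.left)) := (hM J instJ filtJ).some
  haveI pK : PreservesColimitsOfShape J (coyoneda.obj (op K)) := (hK J instJ filtJ).some
  haveI pK' : PreservesColimitsOfShape J (coyoneda.obj (op K')) := (hK' J instJ filtJ).some
  haveI pfst : PreservesColimitsOfShape J (Comma.fst Fst (𝟭 ℬ)) := by
    constructor; intro D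
    have t1 := colimit.isColimit (D ⋙ Comma.fst Fst (𝟭 ℬ))
    have t2 := colimit.isColimit (D ⋙ Comma.snd Fst (𝟭 ℬ))
    refine preservesColimit_of_preserves_colimit_cocone (Comma.coconeOfPreservesIsColimit D t1 t2) ?_
    exact IsColimit.ofIsoColimit t1 (Cocones.ext (Iso.refl _) (by intro j; simp [Comma.coconeOfPreserves]))
  haveI psnd : PreservesColimitsOfShape J (Comma.snd Fst (𝟭 ℬ)) := by
    constructor; intro D
    have t1 := colimit.isColimit (D ⋙ Comma.fst Fst (𝟭 ℬ))
    have t2 := colimit.isColimit (D ⋙ Comma.snd Fst (𝟭 ℬ))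
    refine preservesColimit_of_preserves_colimit_cocone (Comma.coconeOfPreservesIsColimit D t1 t2) ?_
    exact IsColimit.ofIsoColimit t2 (Cocones.ext (Iso.refl _) (by intro j; simp [Comma.coconeOfPreserves]))
  refine ⟨⟨fun {D} => ⟨fun {t} ht => ⟨?_⟩⟩⟩⟩
  have hleft : IsColimit ((Comma.fst Fst (𝟭 ℬ)).mapCocone t) :=
    isColimitOfPreserves _ ht
  have hright : IsColimit ((Comma.snd Fst (𝟭 ℬ)).mapCocone t) :=
    isColimitOfPreserves _ ht
  have hA : IsColimit ((coyoneda.obj (op X.left)).mapCocone ((Comma.fst Fst (𝟭 ℬ)).mapCocone t)) :=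
    isColimitOfPreserves _ hleft
  have hKc : IsColimit ((coyoneda.obj (op K)).mapCocone ((Comma.snd Fst (𝟭 ℬ)).mapCocone t)) :=
    isColimitOfPreserves _ hright
  have hK'c : IsColimit ((coyoneda.obj (op K')).mapCocone ((Comma.snd Fst (𝟭 ℬ)).mapCocone t)) :=
    isColimitOfPreserves _ hright
  apply Types.FilteredColimit.isColimitOf
  · -- surjectivity
    intro φ
    obtain ⟨j₁, g, hg⟩ := Types.jointly_surjective _ hA φ.left
    obtain ⟨j₂, v, hv⟩ := Types.jointly_surjective _ hK'c (c' ≫ φ.right)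
    dsimp at hg hv
    change g ≫ (t.ι.app j₁).left = φ.left at hg
    change v ≫ (t.ι.app j₂).right = c' ≫ φ.right at hv
    set j₃ := IsFiltered.max j₁ j₂
    set g₃ : X.left ⟶ (D.obj j₃).left := g ≫ (D.map (IsFiltered.leftToMax j₁ j₂)).left with hg₃def
    set v₃ : K' ⟶ (D.obj j₃).right := v ≫ (D.map (IsFiltered.rightToMax j₁ j₂)).right with hv₃def
    have hg₃ : g₃ ≫ (t.ι.app j₃).left = φ.left := by
      rw [hg₃def, Category.assoc, ← Comma.comp_left, t.w, hg]
    have hv₃ : v₃ ≫ (t.ι.app j₃).right = c' ≫ φ.right := by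
      rw [hv₃def, Category.assoc, ← Comma.comp_right, t.w, hv]
    have hcoleq : (a ≫ Fst.map g₃ ≫ (D.obj j₃).hom) ≫ (t.ι.app j₃).right
        = (k ≫ v₃) ≫ (t.ι.app j₃).right := by
      have hw : Fst.map (t.ι.app j₃).left ≫ t.pt.hom = (D.obj j₃).hom ≫ (t.ι.app j₃).right := by
        simpa using (t.ι.app j₃).w
      calc (a ≫ Fst.map g₃ ≫ (D.obj j₃).hom) ≫ (t.ι.app j₃).right
          = a ≫ Fst.map g₃ ≫ Fst.map (t.ι.app j₃).left ≫ t.pt.hom := by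
            simp only [Category.assoc, hw]
        _ = a ≫ Fst.map (g₃ ≫ (t.ι.app j₃).left) ≫ t.pt.hom := by simp
        _ = a ≫ Fst.map φ.left ≫ t.pt.hom := by rw [hg₃]
        _ = a ≫ X.hom ≫ φ.right := by
            have := φ.w; simp only [Functor.id_map] at this; rw [this]
        _ = k ≫ c' ≫ φ.right := by rw [← Category.assoc, hpo.w, Category.assoc]
        _ = (k ≫ v₃) ≫ (t.ι.app j₃).right := by rw [← hv₃]; simp
    have heq := (Types.FilteredColimit.isColimit_eq_iff
      ((D ⋙ Comma.snd Fst (𝟭 ℬ)) ⋙ coyoneda.obj (op K)) hKc (i := j₃) (j := j₃)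
      (xi := a ≫ Fst.map g₃ ≫ (D.obj j₃).hom) (xj := k ≫ v₃)).mp (by simpa using hcoleq)
    obtain ⟨j₄, e₁, e₂, he⟩ := heq
    dsimp at he
    change (a ≫ Fst.map g₃ ≫ (D.obj j₃).hom) ≫ (D.map e₁).right = (k ≫ v₃) ≫ (D.map e₂).right at he
    set j₅ := IsFiltered.coeq e₁ e₂ with hj₅def
    set e : j₃ ⟶ j₅ := e₁ ≫ IsFiltered.coeqHom e₁ e₂ with hedef
    have he' : (a ≫ Fst.map g₃ ≫ (D.obj j₃).hom) ≫ (D.map e).right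
        = (k ≫ v₃) ≫ (D.map e).right := by
      have h1 : (a ≫ Fst.map g₃ ≫ (D.obj j₃).hom) ≫ (D.map e).right
          = ((a ≫ Fst.map g₃ ≫ (D.obj j₃).hom) ≫ (D.map e₁).right)
            ≫ (D.map (IsFiltered.coeqHom e₁ e₂)).right := by
        rw [hedef]; simp
      have h2 : (k ≫ v₃) ≫ (D.map e).right
          = ((k ≫ v₃) ≫ (D.map e₂).right) ≫ (D.map (IsFiltered.coeqHom e₁ e₂)).right := by
        rw [hedef, IsFiltered.coeq_condition e₁ e₂]; simp
      rw [h1, h2, he]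
    set g₅ : X.left ⟶ (D.obj j₅).left := g₃ ≫ (D.map e).left with hg₅def
    set v₅ : K' ⟶ (D.obj j₅).right := v₃ ≫ (D.map e).right with hv₅def
    have hkey : a ≫ (Fst.map g₅ ≫ (D.obj j₅).hom) = k ≫ v₅ := by
      have hwD : Fst.map (D.map e).left ≫ (D.obj j₅).hom
          = (D.obj j₃).hom ≫ (D.map e).right := by simpa using (D.map e).w
      calc a ≫ Fst.map g₅ ≫ (D.obj j₅).hom
          = a ≫ Fst.map g₃ ≫ Fst.map (D.map e).left ≫ (D.obj j₅).hom := by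
            rw [hg₅def]; simp
        _ = a ≫ Fst.map g₃ ≫ (D.obj j₃).hom ≫ (D.map e).right := by rw [hwD]
        _ = (a ≫ Fst.map g₃ ≫ (D.obj j₃).hom) ≫ (D.map e).right := by simp
        _ = (k ≫ v₃) ≫ (D.map e).right := he'
        _ = k ≫ v₅ := by rw [hv₅def]; simp
    refine ⟨j₅, ⟨g₅, hpo.desc (Fst.map g₅ ≫ (D.obj j₅).hom) v₅ hkey,
      by simpa using (hpo.inl_desc _ _ hkey).symm⟩, ?_⟩
    have hg₅ : g₅ ≫ (t.ι.app j₅).left = φ.left := by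
      rw [hg₅def, Category.assoc, ← Comma.comp_left, t.w, hg₃]
    have hv₅ : v₅ ≫ (t.ι.app j₅).right = c' ≫ φ.right := by
      rw [hv₅def, Category.assoc, ← Comma.comp_right, t.w, hv₃]
    dsimp
    refine (CommaMorphism.ext ?_ ?_).symm
    · simpa using hg₅
    · dsimp
      refine hpo.hom_ext ?_ ?_
      · rw [← Category.assoc, hpo.inl_desc]
        have hw : Fst.map (t.ι.app j₅).left ≫ t.pt.hom
            = (D.obj j₅).hom ≫ (t.ι.app j₅).right := by simpa using (t.ι.app j₅).w
        calc (Fst.map g₅ ≫ (D.obj j₅).hom) ≫ (t.ι.app j₅).right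
            = Fst.map g₅ ≫ Fst.map (t.ι.app j₅).left ≫ t.pt.hom := by
              simp only [Category.assoc, hw]
          _ = Fst.map (g₅ ≫ (t.ι.app j₅).left) ≫ t.pt.hom := by simp
          _ = Fst.map φ.left ≫ t.pt.hom := by rw [hg₅]
          _ = X.hom ≫ φ.right := by have := φ.w; simpa using this
      · rw [← Category.assoc, hpo.inr_desc]
        exact hv₅
  · -- injectivity
    intro i j ψ ψ' hψ
    dsimp at hψ
    have hl : ψ.left ≫ (t.ι.app i).left = ψ'.left ≫ (t.ι.app j).left := by
      rw [← Comma.comp_left, hψ, Comma.comp_left]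
    obtain ⟨k₁, f₁, g₁, hfg₁⟩ := (Types.FilteredColimit.isColimit_eq_iff
      ((D ⋙ Comma.fst Fst (𝟭 ℬ)) ⋙ coyoneda.obj (op X.left)) hA (i := i) (j := j)
      (xi := ψ.left) (xj := ψ'.left)).mp (by simpa using hl)
    have hr : (c' ≫ ψ.right) ≫ (t.ι.app i).right
        = (c' ≫ ψ'.right) ≫ (t.ι.app j).right := by
      rw [Category.assoc, Category.assoc, ← Comma.comp_right, hψ, Comma.comp_right]
    obtain ⟨k₂, f₂, g₂, hfg₂⟩ := (Types.FilteredColimit.isColimit_eq_iff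
      ((D ⋙ Comma.snd Fst (𝟭 ℬ)) ⋙ coyoneda.obj (op K')) hK'c (i := i) (j := j)
      (xi := c' ≫ ψ.right) (xj := c' ≫ ψ'.right)).mp (by simpa using hr)
    dsimp at hfg₁ hfg₂
    change ψ.left ≫ (D.map f₁).left = ψ'.left ≫ (D.map g₁).left at hfg₁
    change (c' ≫ ψ.right) ≫ (D.map f₂).right = (c' ≫ ψ'.right) ≫ (D.map g₂).right at hfg₂
    set p := IsFiltered.leftToMax k₁ k₂ with hpdef
    set q := IsFiltered.rightToMax k₁ k₂ with hqdef
    set r := IsFiltered.coeqHom (f₁ ≫ p) (f₂ ≫ q) with hrdef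
    set s := IsFiltered.coeqHom (g₁ ≫ (p ≫ r)) (g₂ ≫ (q ≫ r)) with hsdef
    have hcr : (f₁ ≫ p) ≫ r = (f₂ ≫ q) ≫ r := IsFiltered.coeq_condition _ _
    have hcs : (g₁ ≫ (p ≫ r)) ≫ s = (g₂ ≫ (q ≫ r)) ≫ s := IsFiltered.coeq_condition _ _
    have hF2 : f₁ ≫ (p ≫ (r ≫ s)) = f₂ ≫ (q ≫ (r ≫ s)) := by
      calc f₁ ≫ (p ≫ (r ≫ s)) = ((f₁ ≫ p) ≫ r) ≫ s := by simp
        _ = ((f₂ ≫ q) ≫ r) ≫ s := by rw [hcr]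
        _ = f₂ ≫ (q ≫ (r ≫ s)) := by simp
    have hG2 : g₁ ≫ (p ≫ (r ≫ s)) = g₂ ≫ (q ≫ (r ≫ s)) := by
      calc g₁ ≫ (p ≫ (r ≫ s)) = (g₁ ≫ (p ≫ r)) ≫ s := by simp
        _ = (g₂ ≫ (q ≫ r)) ≫ s := hcs
        _ = g₂ ≫ (q ≫ (r ≫ s)) := by simp
    refine ⟨_, f₁ ≫ (p ≫ (r ≫ s)), g₁ ≫ (p ≫ (r ≫ s)), ?_⟩
    dsimp
    have hL : ψ.left ≫ (D.map (f₁ ≫ (p ≫ (r ≫ s)))).left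
        = ψ'.left ≫ (D.map (g₁ ≫ (p ≫ (r ≫ s)))).left := by
      simp only [Functor.map_comp, Comma.comp_left, ← Category.assoc]
      rw [hfg₁]
    apply CommaMorphism.ext
    · simpa using hL
    · show ψ.right ≫ (D.map (f₁ ≫ (p ≫ (r ≫ s)))).right
        = ψ'.right ≫ (D.map (g₁ ≫ (p ≫ (r ≫ s)))).right
      refine hpo.hom_ext ?_ ?_
      · have w1 := (ψ ≫ D.map (f₁ ≫ (p ≫ (r ≫ s)))).w
        have w2 := (ψ' ≫ D.map (g₁ ≫ (p ≫ (r ≫ s)))).w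
        simp only [Comma.comp_left, Comma.comp_right, Functor.id_map] at w1 w2
        rw [← w1, ← w2, hL]
      · rw [hF2, hG2]
        simp only [Functor.map_comp, Comma.comp_right, ← Category.assoc]
        rw [hfg₂]
end

section
/- Let F* ⊣ F_* : 𝒜 → ℬ be a morphism of locally finitely presentable categories. The codomain projection cod : F_*↓ℬ → ℬ has a left adjoint sending B to the object (0, F_*(0) + B, pushout of 0 → B along the unit 0 → F_*F*(0) ≅ F_*(0)), and this left adjoint preserves finitely presented objects; hence cod is part of a morphism of locally finitely presentable categories. -/
open CategoryTheory Limits Opposite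

universe w v u

variable {𝒜 : Type u} {ℬ : Type w} [Category.{v} 𝒜] [Category.{v} ℬ] [IsLFP 𝒜] [IsLFP ℬ]

/-- The object `(0, F_*(0) ⨿ B, coprod.inl)` of the comma category `F_*↓ℬ`: the pushout of
`0 ⟶ B` along the unit `0 ⟶ F_*F*(0) ≅ F_*(0)` is the coproduct inclusion
`F_*(0) ⟶ F_*(0) ⨿ B`. -/
noncomputable def commaCodLeftObj (Fst : 𝒜 ⥤ ℬ) (B : ℬ) : Comma Fst (𝟭 ℬ) where
  left := ⊥_ 𝒜
  right := Fst.obj (⊥_ 𝒜) ⨿ B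
  hom := coprod.inl

noncomputable def myL (Fst : 𝒜 ⥤ ℬ) : ℬ ⥤ Comma Fst (𝟭 ℬ) where
  obj B := { left := ⊥_ 𝒜, right := Fst.obj (⊥_ 𝒜) ⨿ B, hom := coprod.inl }
  map {B B'} g :=
    { left := 𝟙 _
      right := coprod.map (𝟙 _) g
      w := by simp }
  map_id B := by apply CommaMorphism.ext <;> simp
  map_comp f g := by apply CommaMorphism.ext <;> simp

noncomputable def myAdj (Fst : 𝒜 ⥤ ℬ) : myL Fst ⊣ Comma.snd Fst (𝟭 ℬ) :=
  Adjunction.mkOfHomEquiv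
    { homEquiv := fun B X =>
        { toFun := fun φ => coprod.inr ≫ φ.right
          invFun := fun g =>
            { left := initial.to _
              right := coprod.desc (Fst.map (initial.to _) ≫ X.hom) g
              w := by simp [myL, coprod.inl_desc] }
          left_inv := fun φ => by
            apply CommaMorphism.ext
            · apply initial.hom_ext
            · apply coprod.hom_ext
              · have h := φ.w
                simp only [myL, Functor.id_map] at h
                rw [coprod.inl_desc, initial.hom_ext (initial.to X.left) φ.left, h]
              · simp [coprod.inr_desc]
          right_inv := fun g => by simp [coprod.inr_desc] }
      homEquiv_naturality_left_symm := fun f g => by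
        apply CommaMorphism.ext
        · apply initial.hom_ext
        · apply coprod.hom_ext <;> dsimp only [Equiv.coe_fn_symm_mk] <;> simp [myL, coprod.inl_desc, coprod.inr_desc]
      homEquiv_naturality_right := fun f g => by dsimp only [Equiv.coe_fn_mk]; simp [myL]; rfl }

lemma sndPreserves (Fst : 𝒜 ⥤ ℬ) {J : Type v} [SmallCategory J]
    [PreservesColimitsOfShape J Fst] :
    PreservesColimitsOfShape J (Comma.snd Fst (𝟭 ℬ)) where
  preservesColimit {F} := preservesColimit_of_preserves_colimit_cocone
    (Comma.coconeOfPreservesIsColimit F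
      (colimit.isColimit (F ⋙ Comma.fst Fst (𝟭 ℬ)))
      (colimit.isColimit (F ⋙ Comma.snd Fst (𝟭 ℬ))))
    (IsColimit.ofIsoColimit (colimit.isColimit _)
      (Cocones.ext (Iso.refl _) (by simp [Comma.coconeOfPreserves])))

noncomputable def coyonedaIso (Fst : 𝒜 ⥤ ℬ) (B : ℬ) :
    coyoneda.obj (op ((myL Fst).obj B)) ≅ Comma.snd Fst (𝟭 ℬ) ⋙ coyoneda.obj (op B) :=
  NatIso.ofComponents (fun X => Equiv.toIso ((myAdj Fst).homEquiv B X)) (by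
    intro X Y f
    ext φ
    exact (myAdj Fst).homEquiv_naturality_right φ f)

/-- For a morphism of LFP categories `F* ⊣ F_*`, the codomain projection
`cod : F_*↓ℬ ⥤ ℬ` has a left adjoint sending `B` to `(0, F_*(0) ⨿ B, coprod.inl)`, and
this left adjoint preserves finitely presented objects; hence `cod` is part of a morphism
of locally finitely presentable categories. -/
theorem stmt19 (Fst : 𝒜 ⥤ ℬ) (Fup : ℬ ⥤ 𝒜) (adj : Fup ⊣ Fst)
    (hcont : Nonempty (PreservesLimits Fst))
    (hfin : ∀ (J : Type v) (_ : SmallCategory J) (_ : IsFiltered J),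
      Nonempty (PreservesColimitsOfShape J Fst)) :
    ∃ L : ℬ ⥤ Comma Fst (𝟭 ℬ),
      Nonempty (L ⊣ Comma.snd Fst (𝟭 ℬ)) ∧
        (∀ B : ℬ, Nonempty (L.obj B ≅ commaCodLeftObj Fst B)) ∧
        ∀ B : ℬ, IsFinPres B → IsFinPres (L.obj B) := by
  refine ⟨myL Fst, ⟨myAdj Fst⟩, fun B => ⟨Iso.refl _⟩, fun B hB J hJ1 hJ2 => ?_⟩
  haveI := (hfin J hJ1 hJ2).some
  haveI := (hB J hJ1 hJ2).some
  haveI := sndPreserves (ℬ := ℬ) Fst (J := J)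
  exact ⟨preservesColimitsOfShape_of_natIso (coyonedaIso Fst B).symm⟩
end
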